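/- arXiv:2401.09405 — 2 statements merged into one kernel-verified Lean document; each statement's English description precedes it below -/
import Mathlib

section
/- Let n ≥ 2 and m = 3n-2. The subspace of W consisting of all relations satisfied by the generators (G1) = [[[x_1,…,x_n],y_1,…,y_{n-1}],z_1,…,z_{n-1}] and (G2) = [[x_1,…,x_n],[y_1,…,y_n],z_1,…,z_{n-2}] is spanned by the following elements, for all choices of letters and permutations: (G1) − sign(σ)[[[x_{σ(1)},…,x_{σ(n)}],y_1,…,y_{n-1}],z_1,…,z_{n-1}] for σ ∈ S_n; (G1) − sign(τ)[[[x_1,…,x_n],y_{τ(1)},…,y_{τ(n-1)}],z_1,…,z_{n-1}] for τ ∈ S_{n-1}; (G1) − sign(τ)[[[x_1,…,x_n],y_1,…,y_{n-1}],z_{τ(1)},…,z_{τ(n-1)}] for τ ∈ S_{n-1}; (G2) − sign(σ)[[x_{σ(1)},…,x_{σ(n)}],[y_1,…,y_n],z_1,…,z_{n-2}] for σ ∈ S_n; (G2) − sign(σ)[[x_1,…,x_n],[y_{σ(1)},…,y_{σ(n)}],z_1,…,z_{n-2}] for σ ∈ S_n; (G2) − sign(τ)[[x_1,…,x_n],[y_1,…,y_n],z_{τ(1)},…,z_{τ(n-2)}]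 for τ ∈ S_{n-2}; and (G2) + [[y_1,…,y_n],[x_1,…,x_n],z_1,…,z_{n-2}]. -/
namespace LAnKe

/-- Prepend an element to a tuple of length `n - 1`, obtaining a tuple of length `n`. -/
def consF {α : Type} {n : ℕ} (a : α) (v : Fin (n - 1) → α) : Fin n → α := fun i =>
  if h : (i : ℕ) = 0 then a else v ⟨(i : ℕ) - 1, by omega⟩

/-- Prepend two elements to a tuple of length `n - 2`, obtaining a tuple of length `n`. -/
def cons2F {α : Type} {n : ℕ} (a b : α) (v : Fin (n - 2) → α) : Fin n → α := fun i =>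
  if h : (i : ℕ) = 0 then a else if h2 : (i : ℕ) = 1 then b else v ⟨(i : ℕ) - 2, by omega⟩

/-- The tuple obtained from `v : Fin a → α` by omitting the `i`-th entry (a "hat"). -/
def omitF {α : Type} {a : ℕ} (v : Fin a → α) (i : Fin a) : Fin (a - 1) → α := fun k =>
  if h : (k : ℕ) < (i : ℕ) then v ⟨(k : ℕ), by omega⟩ else v ⟨(k : ℕ) + 1, by omega⟩

variable (K : Type) [Field K] {n : ℕ} {L : Type} [AddCommGroup L] [Module K L]

/-- `[a, y₁, …, y_{n-1}]`: the bracket applied to `a` followed by the `n-1` entries of `y`. -/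
def app1 (br : AlternatingMap K L L (Fin n)) (a : L) (y : Fin (n - 1) → L) : L :=
  br (consF a y)

/-- `[a, b, z₁, …, z_{n-2}]`. -/
def app2 (br : AlternatingMap K L L (Fin n)) (a b : L) (z : Fin (n - 2) → L) : L :=
  br (cons2F a b z)

/-- The bracketed word `[[[x₁,…,x_n], y₁,…,y_{n-1}], z₁,…,z_{n-1}]` (a word of type (G1)). -/
def w1 (br : AlternatingMap K L L (Fin n)) (x : Fin n → L) (y z : Fin (n - 1) → L) : L :=
  app1 K br (app1 K br (br x) y) z

/-- The bracketed word `[[x₁,…,x_n], [y₁,…,y_n], z₁,…,z_{n-2}]` (a word of type (G2)). -/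
def w2 (br : AlternatingMap K L L (Fin n)) (x y : Fin n → L) (z : Fin (n - 2) → L) : L :=
  app2 K br (br x) (br y) z

/-- The generalized Jacobi identity for an alternating `n`-ary bracket:
`[[x₁,…,x_n],y₁,…,y_{n-1}] = ∑ᵢ [x₁,…,x_{i-1},[x_i,y₁,…,y_{n-1}],x_{i+1},…,x_n]`. -/
def GJId (br : AlternatingMap K L L (Fin n)) : Prop :=
  ∀ (x : Fin n → L) (y : Fin (n - 1) → L),
    app1 K br (br x) y = ∑ i : Fin n, br (Function.update x i (app1 K br (x i) y))

/-- A linear map commuting with the (alternating `n`-ary) brackets. -/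
def IsBracketHom {L' : Type} [AddCommGroup L'] [Module K L']
    (br : AlternatingMap K L L (Fin n)) (br' : AlternatingMap K L' L' (Fin n))
    (F : L →ₗ[K] L') : Prop :=
  ∀ x : Fin n → L, F (br x) = br' (fun i => F (x i))

/-- `(L, br, ι)` is a free LAnKe (free Filippov algebra) on the set `X`: the bracket is
alternating (hence antisymmetric, as `char K = 0`), satisfies the generalized Jacobi
identity, and every map from `X` to a LAnKe extends uniquely to a bracket-preserving
linear map. -/
def IsFreeLAnKe {X : Type} (br : AlternatingMap K L L (Fin n)) (ι : X → L) : Prop :=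
  GJId K br ∧
    ∀ (L' : Type) [AddCommGroup L'] [Module K L'],
      ∀ (br' : AlternatingMap K L' L' (Fin n)), GJId K br' →
        ∀ f : X → L', ∃! F : L →ₗ[K] L', IsBracketHom K br br' F ∧ ∀ i, F (ι i) = f i

/-- `(A, br, ι)` is a free anticommutative `n`-ary algebra on the set `X`: the bracket is
alternating, and every map from `X` to an algebra with an alternating `n`-ary bracket
extends uniquely to a bracket-preserving linear map.  (The "bracketed words subject only to
antisymmetry" of the paper live inside such an algebra.) -/
def IsFreeAnti {X : Type} (br : AlternatingMap K L L (Fin n)) (ι : X → L) : Prop :=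
  ∀ (L' : Type) [AddCommGroup L'] [Module K L'],
    ∀ (br' : AlternatingMap K L' L' (Fin n)),
      ∀ f : X → L', ∃! F : L →ₗ[K] L', IsBracketHom K br br' F ∧ ∀ i, F (ι i) = f i

variable (m : ℕ)

/-- The letters `x, y, z` of a bracketed permutation of type (G1): jointly they are
pairwise distinct (with `m = 3n-2` this means each letter of `[m]` occurs exactly once). -/
def ValidG1 (x : Fin n → Fin m) (y z : Fin (n - 1) → Fin m) : Prop :=
  Function.Injective (Sum.elim x (Sum.elim y z))

/-- The letters `x, y, z` of a bracketed permutation of type (G2): jointly distinct. -/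
def ValidG2 (x y : Fin n → Fin m) (z : Fin (n - 2) → Fin m) : Prop :=
  Function.Injective (Sum.elim x (Sum.elim y z))

variable {m}

/-- The word `(G1) = [[[x₁,…,x_n],y₁,…,y_{n-1}],z₁,…,z_{n-1}]` on letters `ι ∘ x` etc. -/
def wG1 (br : AlternatingMap K L L (Fin n)) (ι : Fin m → L) (x : Fin n → Fin m)
    (y z : Fin (n - 1) → Fin m) : L :=
  w1 K br (ι ∘ x) (ι ∘ y) (ι ∘ z)

/-- The word `(G2) = [[x₁,…,x_n],[y₁,…,y_n],z₁,…,z_{n-2}]` on letters `ι ∘ x` etc. -/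
def wG2 (br : AlternatingMap K L L (Fin n)) (ι : Fin m → L) (x y : Fin n → Fin m)
    (z : Fin (n - 2) → Fin m) : L :=
  w2 K br (ι ∘ x) (ι ∘ y) (ι ∘ z)

/-- The set of all bracketed permutations of type (G1). -/
def G1Words (br : AlternatingMap K L L (Fin n)) (ι : Fin m → L) : Set L :=
  {l | ∃ x y z, ValidG1 m x y z ∧ l = wG1 K br ι x y z}

/-- The set of all bracketed permutations of type (G2). -/
def G2Words (br : AlternatingMap K L L (Fin n)) (ι : Fin m → L) : Set L :=
  {l | ∃ x y z, ValidG2 m x y z ∧ l = wG2 K br ι x y z}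

/-- The multilinear component: the span of all bracketed permutations (with three
brackets) on `[m]`.  For the free LAnKe this is `Lie_n(m)`; for the free anticommutative
algebra this is the space `W = W_{n,3}` of the paper. -/
def LieComp (br : AlternatingMap K L L (Fin n)) (ι : Fin m → L) : Submodule K L :=
  Submodule.span K (G1Words K br ι ∪ G2Words K br ι)

/-- `W(1)`: the span of the bracketed permutations of type (G1) (this set is stable under
the `S_m`-action, so this is the `S_m`-submodule generated by the (G1)'s). -/
def W1Comp (br : AlternatingMap K L L (Fin n)) (ι : Fin m → L) : Submodule K L :=
  Submodule.span K (G1Words K br ι)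

/-- The relator
`(R1) = (G1) - ∑_{i=1}^{n} (-1)^{i-1} [[[x_i,y₁,…,y_{n-1}],x₁,…,x̂_i,…,x_n],z₁,…,z_{n-1}]`. -/
def R1elt (br : AlternatingMap K L L (Fin n)) (ι : Fin m → L) (x : Fin n → Fin m)
    (y z : Fin (n - 1) → Fin m) : L :=
  wG1 K br ι x y z -
    ∑ i : Fin n, ((-1 : K)) ^ (i : ℕ) •
      w1 K br (consF (ι (x i)) (ι ∘ y)) (ι ∘ omitF x i) (ι ∘ z)

/-- The relator `(R2) = (G1) - [[[x],z],y] - ∑_{i=1}^{n-1} (-1)^{i-1}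
[[x₁,…,x_n],[y_i,z₁,…,z_{n-1}],y₁,…,ŷ_i,…,y_{n-1}]`. -/
def R2elt (br : AlternatingMap K L L (Fin n)) (ι : Fin m → L) (x : Fin n → Fin m)
    (y z : Fin (n - 1) → Fin m) : L :=
  wG1 K br ι x y z - wG1 K br ι x z y -
    ∑ i : Fin (n - 1), ((-1 : K)) ^ (i : ℕ) •
      w2 K br (ι ∘ x) (consF (ι (y i)) (ι ∘ z)) (ι ∘ omitF y i)

/-- The relator `(R3) = (G2) - ∑_{i=1}^{n} (-1)^{i}
[[[y₁,…,y_n],x_i,z₁,…,z_{n-2}],x₁,…,x̂_i,…,x_n]`. -/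
def R3elt (br : AlternatingMap K L L (Fin n)) (ι : Fin m → L) (x y : Fin n → Fin m)
    (z : Fin (n - 2) → Fin m) : L :=
  wG2 K br ι x y z -
    ∑ i : Fin n, ((-1 : K)) ^ ((i : ℕ) + 1) •
      app1 K br (app2 K br (br (ι ∘ y)) (ι (x i)) (ι ∘ z)) (ι ∘ omitF x i)

/-- The relator `(R4) = (G1) - [[[x],z],y] - ∑_{i=1}^{n-1} (-1)^{i-1} ∑_{j=1}^{n} (-1)^{j}
[[[y_i,z₁,…,z_{n-1}],x_j,y₁,…,ŷ_i,…,y_{n-1}],x₁,…,x̂_j,…,x_n]`. -/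
def R4elt (br : AlternatingMap K L L (Fin n)) (ι : Fin m → L) (x : Fin n → Fin m)
    (y z : Fin (n - 1) → Fin m) : L :=
  wG1 K br ι x y z - wG1 K br ι x z y -
    ∑ i : Fin (n - 1), ∑ j : Fin n,
      (((-1 : K)) ^ (i : ℕ) * ((-1 : K)) ^ ((j : ℕ) + 1)) •
        app1 K br
          (app2 K br (br (consF (ι (y i)) (ι ∘ z))) (ι (x j)) (ι ∘ omitF y i))
          (ι ∘ omitF x j)

/-- The relator `(R5) = ∑_{i=1}^{n} [[[x₁,…,x_n],y_i,z₁,…,z_{n-2}],y₁,…,ŷ_i,…,y_n]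
+ ∑_{i=1}^{n} [[[y₁,…,y_n],x_i,z₁,…,z_{n-2}],x₁,…,x̂_i,…,x_n]`. -/
def R5elt (br : AlternatingMap K L L (Fin n)) (ι : Fin m → L) (x y : Fin n → Fin m)
    (z : Fin (n - 2) → Fin m) : L :=
  (∑ i : Fin n,
      app1 K br (app2 K br (br (ι ∘ x)) (ι (y i)) (ι ∘ z)) (ι ∘ omitF y i)) +
    ∑ i : Fin n,
      app1 K br (app2 K br (br (ι ∘ y)) (ι (x i)) (ι ∘ z)) (ι ∘ omitF x i)

/-- The set of all relators (R1). -/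
def R1Set (br : AlternatingMap K L L (Fin n)) (ι : Fin m → L) : Set L :=
  {l | ∃ x y z, ValidG1 m x y z ∧ l = R1elt K br ι x y z}

/-- The set of all relators (R2). -/
def R2Set (br : AlternatingMap K L L (Fin n)) (ι : Fin m → L) : Set L :=
  {l | ∃ x y z, ValidG1 m x y z ∧ l = R2elt K br ι x y z}

/-- The set of all relators (R3). -/
def R3Set (br : AlternatingMap K L L (Fin n)) (ι : Fin m → L) : Set L :=
  {l | ∃ x y z, ValidG2 m x y z ∧ l = R3elt K br ι x y z}

/-- The set of all relators (R4). -/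
def R4Set (br : AlternatingMap K L L (Fin n)) (ι : Fin m → L) : Set L :=
  {l | ∃ x y z, ValidG1 m x y z ∧ l = R4elt K br ι x y z}

/-- The set of all relators (R5). -/
def R5Set (br : AlternatingMap K L L (Fin n)) (ι : Fin m → L) : Set L :=
  {l | ∃ x y z, ValidG2 m x y z ∧ l = R5elt K br ι x y z}

end LAnKe
namespace LAnKe

/-- The data of a bracketed permutation of type
`(G1) = [[[x₁,…,x_n],y₁,…,y_{n-1}],z₁,…,z_{n-1}]` on `[m]`. -/
structure G1D (n m : ℕ) where
  x : Fin n → Fin m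
  y : Fin (n - 1) → Fin m
  z : Fin (n - 1) → Fin m
  valid : ValidG1 m x y z

/-- The data of a bracketed permutation of type
`(G2) = [[x₁,…,x_n],[y₁,…,y_n],z₁,…,z_{n-2}]` on `[m]`. -/
structure G2D (n m : ℕ) where
  x : Fin n → Fin m
  y : Fin n → Fin m
  z : Fin (n - 2) → Fin m
  valid : ValidG2 m x y z

/-- The generators of `W`: bracketed permutations of the two types. -/
def GenT (n m : ℕ) : Type := G1D n m ⊕ G2D n m

variable (K : Type) [Field K] {n m : ℕ} {A : Type} [AddCommGroup A] [Module K A]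

/-- Interpretation of a generator as a bracketed word of the free anticommutative
`n`-ary algebra. -/
def interp (br : AlternatingMap K A A (Fin n)) (ι : Fin m → A) : GenT n m → A
  | Sum.inl d => wG1 K br ι d.x d.y d.z
  | Sum.inr d => wG2 K br ι d.x d.y d.z

/-- The canonical map from the free vector space on the generators to `W`;
its kernel is the space of relations satisfied by the generators. -/
noncomputable def toW (br : AlternatingMap K A A (Fin n)) (ι : Fin m → A) :
    (GenT n m →₀ K) →ₗ[K] A :=
  Finsupp.linearCombination K (interp K br ι)

end LAnKe



namespace LK12

open Equiv

variable {K : Type} [Field K] {M : Type} [AddCommGroup M] [Module K M]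

/-- The "determinant-like" alternating form attached to a family of linear functionals. -/
noncomputable def detForm {r : ℕ} (φ : Fin r → (M →ₗ[K] K)) : AlternatingMap K M K (Fin r) :=
  MultilinearMap.alternatization ((MultilinearMap.mkPiAlgebra K (Fin r) K).compLinearMap φ)

theorem detForm_apply {r : ℕ} (φ : Fin r → (M →ₗ[K] K)) (v : Fin r → M) :
    detForm φ v = ∑ σ : Perm (Fin r), ((Perm.sign σ : ℤ) : K) * ∏ i, φ i (v (σ i)) := by
  rw [detForm, MultilinearMap.alternatization_apply]
  refine Finset.sum_congr rfl fun σ _ => ?_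
  rw [MultilinearMap.domDomCongr_apply, MultilinearMap.compLinearMap_apply,
    MultilinearMap.mkPiAlgebra_apply, Units.smul_def, zsmul_eq_mul]

theorem detForm_eq_zero {r : ℕ} (φ : Fin r → (M →ₗ[K] K)) (v : Fin r → M)
    (h : ∀ σ : Perm (Fin r), ∃ i, φ i (v (σ i)) = 0) : detForm φ v = 0 := by
  rw [detForm_apply]
  refine Finset.sum_eq_zero fun σ _ => ?_
  obtain ⟨i, hi⟩ := h σ
  rw [Finset.prod_eq_zero (Finset.mem_univ i) hi, mul_zero]

theorem detForm_zero_row {r : ℕ} (φ : Fin r → (M →ₗ[K] K)) (v : Fin r → M)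
    (i₀ : Fin r) (h : ∀ j, φ i₀ (v j) = 0) : detForm φ v = 0 :=
  detForm_eq_zero φ v fun σ => ⟨i₀, h _⟩

theorem detForm_zero_col {r : ℕ} (φ : Fin r → (M →ₗ[K] K)) (v : Fin r → M)
    (j₀ : Fin r) (h : ∀ i, φ i (v j₀) = 0) : detForm φ v = 0 :=
  detForm_eq_zero φ v fun σ => ⟨σ⁻¹ j₀, by simpa using h (σ⁻¹ j₀)⟩

theorem detForm_eq_single {r : ℕ} (φ : Fin r → (M →ₗ[K] K)) (v : Fin r → M)
    (π : Perm (Fin r)) (h : ∀ i j, φ i (v j) ≠ 0 → j = π i) :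
    detForm φ v = ((Perm.sign π : ℤ) : K) * ∏ i, φ i (v (π i)) := by
  rw [detForm_apply]
  refine Finset.sum_eq_single π (fun σ _ hσ => ?_) (fun h => absurd (Finset.mem_univ π) h)
  have : ∃ i, σ i ≠ π i := by
    by_contra hc
    push_neg at hc
    exact hσ (Equiv.ext hc)
  obtain ⟨i, hi⟩ := this
  have : φ i (v (σ i)) = 0 := by
    by_contra hne
    exact hi (h i (σ i) hne)
  rw [Finset.prod_eq_zero (Finset.mem_univ i) this, mul_zero]

/-- Extension of a permutation of `Fin r` to `Fin (r+1)` fixing `0`. -/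
def ext0 {r : ℕ} (τ : Perm (Fin r)) : Perm (Fin (r + 1)) :=
  Equiv.Perm.decomposeFin.symm (0, τ)

@[simp] theorem ext0_zero {r : ℕ} (τ : Perm (Fin r)) : ext0 τ 0 = 0 :=
  Equiv.Perm.decomposeFin_symm_apply_zero 0 τ

@[simp] theorem ext0_succ {r : ℕ} (τ : Perm (Fin r)) (i : Fin r) :
    ext0 τ i.succ = (τ i).succ := by
  rw [ext0, Equiv.Perm.decomposeFin_symm_apply_succ]
  simp

@[simp] theorem sign_ext0 {r : ℕ} (τ : Perm (Fin r)) : Perm.sign (ext0 τ) = Perm.sign τ := by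
  rw [ext0, Equiv.Perm.decomposeFin.symm_sign]
  simp

theorem cons_comp_ext0 {α : Type*} {r : ℕ} (a : α) (v : Fin r → α) (τ : Perm (Fin r)) :
    (Fin.cons a v : Fin (r + 1) → α) ∘ (ext0 τ) = Fin.cons a (v ∘ τ) := by
  funext i
  refine Fin.cases ?_ (fun j => ?_) i <;> simp

end LK12

namespace LK12

open Equiv LAnKe

section Cons

variable {α : Type} {r : ℕ}

theorem consF_eq_cons (a : α) (v : Fin (r + 1 - 1) → α) :
    (consF a v : Fin (r + 1) → α) = Fin.cons a v := by
  funext i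
  refine Fin.cases ?_ (fun j => ?_) i
  · simp [consF]
  · simp [consF, Fin.val_succ]

theorem cons2F_eq_cons (a b : α) (v : Fin (r + 2 - 2) → α) :
    (cons2F a b v : Fin (r + 2) → α) = Fin.cons a (Fin.cons b v) := by
  funext i
  refine Fin.cases ?_ (fun j => ?_) i
  · simp [cons2F]
  · refine Fin.cases ?_ (fun l => ?_) j
    · simp [cons2F]
    · simp [cons2F, Fin.val_succ]

theorem comp_consF {β : Type} (F : α → β) (a : α) (v : Fin (r + 1 - 1) → α) :
    (fun i => F (consF a v i)) = consF (F a) (fun i => F (v i)) := by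
  funext i
  simp only [consF]
  split <;> rfl

theorem comp_cons2F {β : Type} (F : α → β) (a b : α) (v : Fin (r + 2 - 2) → α) :
    (fun i => F (cons2F a b v i)) = cons2F (F a) (F b) (fun i => F (v i)) := by
  funext i
  simp only [cons2F]
  split
  · rfl
  · split <;> rfl

theorem cons_cons_comp_swap (a b : α) (v : Fin r → α) :
    (Fin.cons a (Fin.cons b v) : Fin (r + 2) → α) ∘ Equiv.swap 0 1 =
      Fin.cons b (Fin.cons a v) := by
  funext i
  refine Fin.cases ?_ (fun j => ?_) i
  · simp [Equiv.swap_apply_left]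
  · refine Fin.cases ?_ (fun l => ?_) j
    · have : Equiv.swap (0 : Fin (r + 2)) 1 1 = 0 := Equiv.swap_apply_right 0 1
      simp only [Function.comp_apply]
      rw [show ((0 : Fin (r+1)).succ : Fin (r+2)) = 1 from rfl, this]
      rfl
    · have h1 : (l.succ.succ : Fin (r + 2)) ≠ 0 := Fin.succ_ne_zero _
      have h2 : (l.succ.succ : Fin (r + 2)) ≠ 1 := by
        intro h
        have := congrArg Fin.val h
        simp [Fin.val_succ] at this
      simp only [Function.comp_apply, Equiv.swap_apply_of_ne_of_ne h1 h2]
      simp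

end Cons

section Words

variable {K : Type} [Field K] {r m : ℕ} {L : Type} [AddCommGroup L] [Module K L]

theorem br_comp_perm (br : AlternatingMap K L L (Fin r)) (v : Fin r → L) (σ : Perm (Fin r)) :
    br (v ∘ σ) = ((Perm.sign σ : ℤ) : K) • br v := by
  rw [br.map_perm v σ, Units.smul_def, Int.cast_smul_eq_zsmul]

theorem app1_smul (br : AlternatingMap K L L (Fin (r + 1))) (c : K) (a : L)
    (y : Fin r → L) : app1 K br (c • a) y = c • app1 K br a y := by
  rw [app1, app1, consF_eq_cons, consF_eq_cons]
  calc br (Fin.cons (c • a) y)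
      = br (Function.update (Fin.cons a y) 0 (c • a)) := by rw [Fin.update_cons_zero]
    _ = c • br (Function.update (Fin.cons a y) 0 a) := br.map_update_smul _ _ _ _
    _ = c • br (Fin.cons a y) := by rw [Fin.update_cons_zero]

theorem app2_smul_left (br : AlternatingMap K L L (Fin (r + 2))) (c : K) (a b : L)
    (z : Fin r → L) : app2 K br (c • a) b z = c • app2 K br a b z := by
  rw [app2, app2, cons2F_eq_cons, cons2F_eq_cons]
  calc br (Fin.cons (c • a) (Fin.cons b z))
      = br (Function.update (Fin.cons a (Fin.cons b z)) 0 (c • a)) := by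
        rw [Fin.update_cons_zero]
    _ = c • br (Function.update (Fin.cons a (Fin.cons b z)) 0 a) := br.map_update_smul _ _ _ _
    _ = c • br (Fin.cons a (Fin.cons b z)) := by rw [Fin.update_cons_zero]

theorem app2_smul_mid (br : AlternatingMap K L L (Fin (r + 2))) (c : K) (a b : L)
    (z : Fin r → L) : app2 K br a (c • b) z = c • app2 K br a b z := by
  have h : ∀ w : L, (Fin.cons a (Fin.cons w z) : Fin (r + 2) → L) =
      Function.update (Fin.cons a (Fin.cons b z)) (0 : Fin (r + 1)).succ w := by
    intro w
    rw [← Fin.cons_update, Fin.update_cons_zero]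
  rw [app2, app2, cons2F_eq_cons, cons2F_eq_cons, h (c • b),
    AlternatingMap.map_update_smul, ← h b]

theorem app1_comp_perm (br : AlternatingMap K L L (Fin (r + 1))) (a : L)
    (y : Fin r → L) (τ : Perm (Fin r)) :
    app1 K br a (y ∘ τ) = ((Perm.sign τ : ℤ) : K) • app1 K br a y := by
  rw [app1, app1, consF_eq_cons, consF_eq_cons, ← cons_comp_ext0,
    br_comp_perm, sign_ext0]

theorem app2_comp_perm (br : AlternatingMap K L L (Fin (r + 2))) (a b : L)
    (z : Fin r → L) (τ : Perm (Fin r)) :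
    app2 K br a b (z ∘ τ) = ((Perm.sign τ : ℤ) : K) • app2 K br a b z := by
  rw [app2, app2, cons2F_eq_cons, cons2F_eq_cons, ← cons_comp_ext0 b z τ,
    ← cons_comp_ext0 a _ (ext0 τ), br_comp_perm, sign_ext0, sign_ext0]

theorem app2_swap (br : AlternatingMap K L L (Fin (r + 2))) (a b : L)
    (z : Fin r → L) : app2 K br b a z = - app2 K br a b z := by
  rw [app2, app2, cons2F_eq_cons, cons2F_eq_cons, ← cons_cons_comp_swap,
    br.map_swap]
  intro h
  have := congrArg Fin.val h
  simp at this

end Words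

end LK12

namespace LK12

open Equiv LAnKe

section WordSigns

variable {K : Type} [Field K] {k m : ℕ} {L : Type} [AddCommGroup L] [Module K L]
variable (br : AlternatingMap K L L (Fin (k + 2))) (ι : Fin m → L)

theorem sign_mul_self_cast {ι' : Type*} [DecidableEq ι'] [Fintype ι'] (σ : Perm ι') :
    ((Perm.sign σ : ℤ) : K) * ((Perm.sign σ : ℤ) : K) = 1 := by
  rcases Int.units_eq_one_or (Perm.sign σ) with h | h <;> rw [h] <;> norm_num

theorem wG1_permx (x : Fin (k + 2) → Fin m) (y z : Fin (k + 1) → Fin m)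
    (σ : Perm (Fin (k + 2))) :
    wG1 K br ι (x ∘ σ) y z = ((Perm.sign σ : ℤ) : K) • wG1 K br ι x y z := by
  rw [wG1, wG1, w1, w1, show (ι ∘ (x ∘ σ)) = (ι ∘ x) ∘ σ from rfl, br_comp_perm,
    app1_smul, app1_smul]

theorem wG1_permy (x : Fin (k + 2) → Fin m) (y z : Fin (k + 1) → Fin m)
    (τ : Perm (Fin (k + 1))) :
    wG1 K br ι x (y ∘ τ) z = ((Perm.sign τ : ℤ) : K) • wG1 K br ι x y z := by
  rw [wG1, wG1, w1, w1, show (ι ∘ (y ∘ τ)) = (ι ∘ y) ∘ τ from rfl, app1_comp_perm,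
    app1_smul]

theorem wG1_permz (x : Fin (k + 2) → Fin m) (y z : Fin (k + 1) → Fin m)
    (τ : Perm (Fin (k + 1))) :
    wG1 K br ι x y (z ∘ τ) = ((Perm.sign τ : ℤ) : K) • wG1 K br ι x y z := by
  rw [wG1, wG1, w1, w1, show (ι ∘ (z ∘ τ)) = (ι ∘ z) ∘ τ from rfl, app1_comp_perm]

theorem wG2_permx (x y : Fin (k + 2) → Fin m) (z : Fin k → Fin m)
    (σ : Perm (Fin (k + 2))) :
    wG2 K br ι (x ∘ σ) y z = ((Perm.sign σ : ℤ) : K) • wG2 K br ι x y z := by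
  rw [wG2, wG2, w2, w2, show (ι ∘ (x ∘ σ)) = (ι ∘ x) ∘ σ from rfl, br_comp_perm,
    app2_smul_left]

theorem wG2_permy (x y : Fin (k + 2) → Fin m) (z : Fin k → Fin m)
    (σ : Perm (Fin (k + 2))) :
    wG2 K br ι x (y ∘ σ) z = ((Perm.sign σ : ℤ) : K) • wG2 K br ι x y z := by
  rw [wG2, wG2, w2, w2, show (ι ∘ (y ∘ σ)) = (ι ∘ y) ∘ σ from rfl, br_comp_perm,
    app2_smul_mid]

theorem wG2_permz (x y : Fin (k + 2) → Fin m) (z : Fin k → Fin m)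
    (τ : Perm (Fin k)) :
    wG2 K br ι x y (z ∘ τ) = ((Perm.sign τ : ℤ) : K) • wG2 K br ι x y z := by
  rw [wG2, wG2, w2, w2, show (ι ∘ (z ∘ τ)) = (ι ∘ z) ∘ τ from rfl, app2_comp_perm]

theorem wG2_swapxy (x y : Fin (k + 2) → Fin m) (z : Fin k → Fin m) :
    wG2 K br ι y x z = - wG2 K br ι x y z := by
  rw [wG2, wG2, w2, w2, app2_swap]

end WordSigns

section Valid

variable {k m : ℕ}

theorem validG1_comp (x : Fin (k + 2) → Fin m) (y z : Fin (k + 1) → Fin m)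
    (h : ValidG1 m x y z) (σ : Perm (Fin (k + 2))) (τ ρ : Perm (Fin (k + 1))) :
    ValidG1 (n := k + 2) m (x ∘ σ) (y ∘ τ) (z ∘ ρ) := by
  have he : (Sum.elim (x ∘ σ) (Sum.elim (y ∘ τ) (z ∘ ρ)) :
      Fin (k + 2) ⊕ (Fin (k + 1) ⊕ Fin (k + 1)) → Fin m) =
      (Sum.elim x (Sum.elim y z)) ∘ (Sum.map σ (Sum.map τ ρ)) := by
    funext i
    rcases i with i | i
    · rfl
    · rcases i with i | i <;> rfl
  rw [ValidG1, he]
  exact h.comp ((σ.injective.sumMap (τ.injective.sumMap ρ.injective)))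

theorem validG2_comp (x y : Fin (k + 2) → Fin m) (z : Fin k → Fin m)
    (h : ValidG2 m x y z) (σ τ : Perm (Fin (k + 2))) (ρ : Perm (Fin k)) :
    ValidG2 (n := k + 2) m (x ∘ σ) (y ∘ τ) (z ∘ ρ) := by
  have he : (Sum.elim (x ∘ σ) (Sum.elim (y ∘ τ) (z ∘ ρ)) :
      Fin (k + 2) ⊕ (Fin (k + 2) ⊕ Fin k) → Fin m) =
      (Sum.elim x (Sum.elim y z)) ∘ (Sum.map σ (Sum.map τ ρ)) := by
    funext i
    rcases i with i | i
    · rfl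
    · rcases i with i | i <;> rfl
  rw [ValidG2, he]
  exact h.comp ((σ.injective.sumMap (τ.injective.sumMap ρ.injective)))

theorem validG2_swap (x y : Fin (k + 2) → Fin m) (z : Fin k → Fin m)
    (h : ValidG2 m x y z) : ValidG2 (n := k + 2) m y x z := by
  have he : (Sum.elim y (Sum.elim x z) :
      Fin (k + 2) ⊕ (Fin (k + 2) ⊕ Fin k) → Fin m) =
      (Sum.elim x (Sum.elim y z)) ∘
        (Sum.elim (fun i => Sum.inr (Sum.inl i)) (Sum.elim Sum.inl
          (fun i => Sum.inr (Sum.inr i)))) := by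
    funext i
    rcases i with i | i
    · rfl
    · rcases i with i | i <;> rfl
  rw [ValidG2, he]
  refine h.comp ?_
  rintro (i | i | i) (j | j | j) hij <;> simp_all

end Valid

end LK12

namespace LK12
open Equiv LAnKe
section Primes
variable {K : Type} [Field K] {k m : ℕ} {L : Type} [AddCommGroup L] [Module K L]
variable (br : AlternatingMap K L L (Fin (k + 2))) (ι : Fin m → L)

theorem wG1_permx' (x : Fin (k + 2) → Fin m) (y z : Fin (k + 2 - 1) → Fin m)
    (σ : Perm (Fin (k + 2))) :
    wG1 K br ι (x ∘ σ) y z = ((Perm.sign σ : ℤ) : K) • wG1 K br ι x y z :=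
  wG1_permx br ι x y z σ

theorem wG1_permy' (x : Fin (k + 2) → Fin m) (y z : Fin (k + 2 - 1) → Fin m)
    (τ : Perm (Fin (k + 2 - 1))) :
    wG1 K br ι x (y ∘ τ) z = ((Perm.sign τ : ℤ) : K) • wG1 K br ι x y z :=
  wG1_permy br ι x y z τ

theorem wG1_permz' (x : Fin (k + 2) → Fin m) (y z : Fin (k + 2 - 1) → Fin m)
    (τ : Perm (Fin (k + 2 - 1))) :
    wG1 K br ι x y (z ∘ τ) = ((Perm.sign τ : ℤ) : K) • wG1 K br ι x y z :=
  wG1_permz br ι x y z τ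

theorem wG2_permx' (x y : Fin (k + 2) → Fin m) (z : Fin (k + 2 - 2) → Fin m)
    (σ : Perm (Fin (k + 2))) :
    wG2 K br ι (x ∘ σ) y z = ((Perm.sign σ : ℤ) : K) • wG2 K br ι x y z :=
  wG2_permx br ι x y z σ

theorem wG2_permy' (x y : Fin (k + 2) → Fin m) (z : Fin (k + 2 - 2) → Fin m)
    (σ : Perm (Fin (k + 2))) :
    wG2 K br ι x (y ∘ σ) z = ((Perm.sign σ : ℤ) : K) • wG2 K br ι x y z :=
  wG2_permy br ι x y z σ

theorem wG2_permz' (x y : Fin (k + 2) → Fin m) (z : Fin (k + 2 - 2) → Fin m)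
    (τ : Perm (Fin (k + 2 - 2))) :
    wG2 K br ι x y (z ∘ τ) = ((Perm.sign τ : ℤ) : K) • wG2 K br ι x y z :=
  wG2_permz br ι x y z τ

theorem wG2_swapxy' (x y : Fin (k + 2) → Fin m) (z : Fin (k + 2 - 2) → Fin m) :
    wG2 K br ι y x z = - wG2 K br ι x y z :=
  wG2_swapxy br ι x y z

end Primes
end LK12

namespace LK12

open Equiv LAnKe

theorem altmap_sum_apply {R : Type*} [Semiring R] {M N : Type*} [AddCommMonoid M]
    [Module R M] [AddCommMonoid N] [Module R N] {ι : Type*} {α : Type*} (s : Finset α)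
    (f : α → AlternatingMap R M N ι) (v : ι → M) :
    (∑ a ∈ s, f a) v = ∑ a ∈ s, f a v := by
  induction s using Finset.cons_induction with
  | empty => rfl
  | cons a s ha ih => rw [Finset.sum_cons, Finset.sum_cons, AlternatingMap.add_apply, ih]

instance (n m : ℕ) : Finite (G1D n m) := by
  refine Finite.of_injective (fun d => (d.x, d.y, d.z)) ?_
  rintro ⟨x, y, z, v⟩ ⟨x', y', z', v'⟩ h
  simp only [Prod.mk.injEq] at h
  obtain ⟨h1, h2, h3⟩ := h
  subst h1; subst h2; subst h3; rfl

instance (n m : ℕ) : Finite (G2D n m) := by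
  refine Finite.of_injective (fun d => (d.x, d.y, d.z)) ?_
  rintro ⟨x, y, z, v⟩ ⟨x', y', z', v'⟩ h
  simp only [Prod.mk.injEq] at h
  obtain ⟨h1, h2, h3⟩ := h
  subst h1; subst h2; subst h3; rfl

instance (n m : ℕ) : Finite (GenT n m) := by
  unfold GenT; infer_instance

noncomputable instance (n m : ℕ) : Fintype (GenT n m) := Fintype.ofFinite _

section Model

variable (K : Type) [Field K] (k m : ℕ)

abbrev J1 := Fin (k + 2) → Fin m
abbrev J2 := (Fin (k + 2) → Fin m) × (Fin (k + 1) → Fin m)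
abbrev LM := (Fin m → K) × ((J1 k m) →₀ K) × ((J2 k m) →₀ K) × ((GenT (k + 2) m) →₀ K)

noncomputable def pr0 : LM K k m →ₗ[K] (Fin m → K) := LinearMap.fst K _ _
noncomputable def pr1 : LM K k m →ₗ[K] ((J1 k m) →₀ K) :=
  (LinearMap.fst K _ _).comp (LinearMap.snd K _ _)
noncomputable def pr2 : LM K k m →ₗ[K] ((J2 k m) →₀ K) :=
  ((LinearMap.fst K _ _).comp (LinearMap.snd K _ _)).comp (LinearMap.snd K _ _)
noncomputable def pr3 : LM K k m →ₗ[K] ((GenT (k + 2) m) →₀ K) :=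
  ((LinearMap.snd K _ _).comp (LinearMap.snd K _ _)).comp (LinearMap.snd K _ _)

noncomputable def c0 (j : Fin m) : LM K k m →ₗ[K] K :=
  (LinearMap.proj j).comp (pr0 K k m)
noncomputable def c1 (a : J1 k m) : LM K k m →ₗ[K] K :=
  (Finsupp.lapply a).comp (pr1 K k m)
noncomputable def c2 (ab : J2 k m) : LM K k m →ₗ[K] K :=
  (Finsupp.lapply ab).comp (pr2 K k m)

noncomputable def el (i : Fin m) : LM K k m := (Pi.single i 1, 0, 0, 0)

noncomputable def v1 (a : J1 k m) : LM K k m := (0, Finsupp.single a 1, 0, 0)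
noncomputable def v2 (ab : J2 k m) : LM K k m := (0, 0, Finsupp.single ab 1, 0)
noncomputable def v3 (g : GenT (k + 2) m) : LM K k m := (0, 0, 0, Finsupp.single g 1)

noncomputable def rows1 (a : J1 k m) : Fin (k + 2) → (LM K k m →ₗ[K] K) :=
  fun i => c0 K k m (a i)
noncomputable def rows2 (ab : J2 k m) : Fin (k + 2) → (LM K k m →ₗ[K] K) :=
  Fin.cons (c1 K k m ab.1) (fun i => c0 K k m (ab.2 i))
noncomputable def rows3 : GenT (k + 2) m → Fin (k + 2) → (LM K k m →ₗ[K] K)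
  | Sum.inl d => Fin.cons (c2 K k m (d.x, d.y)) (fun i => c0 K k m (d.z i))
  | Sum.inr d => Fin.cons (c1 K k m d.x) (Fin.cons (c1 K k m d.y) (fun i => c0 K k m (d.z i)))

noncomputable def psi1 (a : J1 k m) : AlternatingMap K (LM K k m) K (Fin (k + 2)) :=
  detForm (rows1 K k m a)
noncomputable def psi2 (ab : J2 k m) : AlternatingMap K (LM K k m) K (Fin (k + 2)) :=
  detForm (rows2 K k m ab)
noncomputable def psi3 (g : GenT (k + 2) m) : AlternatingMap K (LM K k m) K (Fin (k + 2)) :=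
  detForm (rows3 K k m g)

noncomputable def brM : AlternatingMap K (LM K k m) (LM K k m) (Fin (k + 2)) :=
  (∑ a : J1 k m, (LinearMap.toSpanSingleton K _ (v1 K k m a)).compAlternatingMap
      (psi1 K k m a)) +
  (∑ ab : J2 k m, (LinearMap.toSpanSingleton K _ (v2 K k m ab)).compAlternatingMap
      (psi2 K k m ab)) +
  (∑ g : GenT (k + 2) m, (LinearMap.toSpanSingleton K _ (v3 K k m g)).compAlternatingMap
      (psi3 K k m g))

variable {K k m}

theorem c0_el (j i : Fin m) : c0 K k m j (el K k m i) = if j = i then 1 else 0 := by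
  simp [c0, el, pr0, Pi.single_apply]

theorem c1_el (a : J1 k m) (i : Fin m) : c1 K k m a (el K k m i) = 0 := by
  simp [c1, el, pr1]

theorem c2_el (ab : J2 k m) (i : Fin m) : c2 K k m ab (el K k m i) = 0 := by
  simp [c2, el, pr2]

theorem brM_apply (v : Fin (k + 2) → LM K k m) :
    brM K k m v = (∑ a : J1 k m, psi1 K k m a v • v1 K k m a) +
      (∑ ab : J2 k m, psi2 K k m ab v • v2 K k m ab) +
      (∑ g : GenT (k + 2) m, psi3 K k m g v • v3 K k m g) := by
  rw [brM, AlternatingMap.add_apply, AlternatingMap.add_apply,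
    altmap_sum_apply, altmap_sum_apply, altmap_sum_apply]
  simp [LinearMap.toSpanSingleton_apply]

theorem c0_brM (j : Fin m) (v : Fin (k + 2) → LM K k m) : c0 K k m j (brM K k m v) = 0 := by
  rw [brM_apply]
  simp only [map_add, map_sum, map_smul]
  have h1 : ∀ a : J1 k m, c0 K k m j (v1 K k m a) = 0 := by intro a; simp [c0, v1, pr0]
  have h2 : ∀ ab : J2 k m, c0 K k m j (v2 K k m ab) = 0 := by intro ab; simp [c0, v2, pr0]
  have h3 : ∀ g : GenT (k + 2) m, c0 K k m j (v3 K k m g) = 0 := by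
    intro g; simp [c0, v3, pr0]
  simp [h1, h2, h3]

theorem c1_brM (a : J1 k m) (v : Fin (k + 2) → LM K k m) :
    c1 K k m a (brM K k m v) = psi1 K k m a v := by
  classical
  rw [brM_apply]
  simp only [map_add, map_sum, map_smul]
  have h1 : ∀ ab : J2 k m, c1 K k m a (v2 K k m ab) = 0 := by intro ab; simp [c1, v2, pr1]
  have h2 : ∀ g : GenT (k + 2) m, c1 K k m a (v3 K k m g) = 0 := by
    intro g; simp [c1, v3, pr1]
  have h3 : ∀ a' : J1 k m, c1 K k m a (v1 K k m a') = if a' = a then 1 else 0 := by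
    intro a'; simp [c1, v1, pr1, Finsupp.lapply, Finsupp.single_apply]
  simp only [smul_eq_mul, h1, h2, h3, mul_ite, mul_one, mul_zero]
  rw [Finset.sum_ite_eq' Finset.univ a (fun a' => psi1 K k m a' v)]
  simp

theorem c2_brM (ab : J2 k m) (v : Fin (k + 2) → LM K k m) :
    c2 K k m ab (brM K k m v) = psi2 K k m ab v := by
  classical
  rw [brM_apply]
  simp only [map_add, map_sum, map_smul]
  have h1 : ∀ a : J1 k m, c2 K k m ab (v1 K k m a) = 0 := by intro a; simp [c2, v1, pr2]
  have h2 : ∀ g : GenT (k + 2) m, c2 K k m ab (v3 K k m g) = 0 := by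
    intro g; simp [c2, v3, pr2]
  have h3 : ∀ ab' : J2 k m, c2 K k m ab (v2 K k m ab') = if ab' = ab then 1 else 0 := by
    intro ab'; simp [c2, v2, pr2, Finsupp.lapply, Finsupp.single_apply]
  simp only [smul_eq_mul, h1, h2, h3, mul_ite, mul_one, mul_zero]
  rw [Finset.sum_ite_eq' Finset.univ ab (fun ab' => psi2 K k m ab' v)]
  simp

theorem pr3_brM (v : Fin (k + 2) → LM K k m) :
    pr3 K k m (brM K k m v) = ∑ g : GenT (k + 2) m, psi3 K k m g v • Finsupp.single g 1 := by
  rw [brM_apply]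
  simp only [map_add, map_sum, map_smul]
  have h1 : ∀ a : J1 k m, pr3 K k m (v1 K k m a) = 0 := by intro a; simp [pr3, v1]
  have h2 : ∀ ab : J2 k m, pr3 K k m (v2 K k m ab) = 0 := by intro ab; simp [pr3, v2]
  have h3 : ∀ g : GenT (k + 2) m, pr3 K k m (v3 K k m g) = Finsupp.single g 1 := by
    intro g; simp [pr3, v3]
  simp [h1, h2, h3]

end Model

end LK12

namespace LK12

open Equiv LAnKe

section WordVals

variable {K : Type} [Field K] {k m : ℕ}

theorem ite_one_ne_zero {p : Prop} [Decidable p] (h : (if p then (1 : K) else 0) ≠ 0) : p := by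
  by_contra hc
  rw [if_neg hc] at h
  exact h rfl

/-- If the ranges of two tuples mutually contain each other and `x` is injective,
then `a` is a permutation of `x`. -/
theorem perm_of_sub {r : ℕ} {a x : Fin r → Fin m} (hx : Function.Injective x)
    (h1 : ∀ i, ∃ j, a i = x j) (h2 : ∀ j, ∃ i, a i = x j) :
    ∃ σ : Perm (Fin r), a = x ∘ σ := by
  choose g hg using h1
  have hsurj : Function.Surjective g := by
    intro j
    obtain ⟨i, hi⟩ := h2 j
    exact ⟨i, hx (by rw [← hg i, hi])⟩
  have hbij : Function.Bijective g := Finite.surjective_iff_bijective.mp hsurj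
  exact ⟨Equiv.ofBijective g hbij, by funext i; simpa using hg i⟩

noncomputable def wd1 (x : Fin (k + 2) → Fin m) : LM K k m :=
  brM K k m (fun i => el K k m (x i))

noncomputable def wd2 (x : Fin (k + 2) → Fin m) (y : Fin (k + 1) → Fin m) : LM K k m :=
  brM K k m (Fin.cons (wd1 x) (fun i => el K k m (y i)))

theorem c0_wd1 (j : Fin m) (x : Fin (k + 2) → Fin m) : c0 K k m j (wd1 (K := K) x) = 0 :=
  c0_brM j _

theorem c2_wd1 (ab : J2 k m) (x : Fin (k + 2) → Fin m) : c2 K k m ab (wd1 (K := K) x) = 0 := by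
  rw [wd1, c2_brM, psi2]
  refine detForm_zero_row _ _ 0 fun j => ?_
  rw [rows2, Fin.cons_zero, c1_el]

theorem c1_wd1_match {x a : Fin (k + 2) → Fin m} (hx : Function.Injective x)
    (σ : Perm (Fin (k + 2))) (ha : a = x ∘ σ) :
    c1 K k m a (wd1 (K := K) x) = ((Perm.sign σ : ℤ) : K) := by
  rw [wd1, c1_brM, psi1]
  rw [detForm_eq_single _ _ σ ?_]
  · have : ∀ i : Fin (k + 2), rows1 K k m a i (el K k m (x (σ i))) = 1 := by
      intro i
      rw [rows1, c0_el, if_pos (by rw [ha]; rfl)]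
    simp [this]
  · intro i j h
    rw [rows1, c0_el] at h
    have := ite_one_ne_zero h
    rw [ha] at this
    exact (hx this).symm

theorem c1_wd1_zero {x a : Fin (k + 2) → Fin m} (hx : Function.Injective x)
    (hno : ∀ σ : Perm (Fin (k + 2)), a ≠ x ∘ σ) :
    c1 K k m a (wd1 (K := K) x) = 0 := by
  rw [wd1, c1_brM, psi1]
  by_cases h1 : ∀ i, ∃ j, a i = x j
  · by_cases h2 : ∀ j, ∃ i, a i = x j
    · obtain ⟨σ, hσ⟩ := perm_of_sub hx h1 h2
      exact absurd hσ (hno σ)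
    · push_neg at h2
      obtain ⟨j, hj⟩ := h2
      refine detForm_zero_col _ _ j fun i => ?_
      rw [rows1, c0_el, if_neg (hj i)]
  · push_neg at h1
    obtain ⟨i, hi⟩ := h1
    refine detForm_zero_row _ _ i fun j => ?_
    rw [rows1, c0_el, if_neg (hi j)]

theorem c0_wd2 (j : Fin m) (x : Fin (k + 2) → Fin m) (y : Fin (k + 1) → Fin m) :
    c0 K k m j (wd2 (K := K) x y) = 0 :=
  c0_brM j _

theorem c1_wd2 (a : J1 k m) (x : Fin (k + 2) → Fin m) (y : Fin (k + 1) → Fin m) :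
    c1 K k m a (wd2 (K := K) x y) = 0 := by
  rw [wd2, c1_brM, psi1]
  refine detForm_zero_col _ _ 0 fun i => ?_
  rw [Fin.cons_zero, rows1, c0_wd1]

theorem c2_wd2_match (x : Fin (k + 2) → Fin m) {y b : Fin (k + 1) → Fin m}
    (hy : Function.Injective y) (a : J1 k m) (τ : Perm (Fin (k + 1))) (hb : b = y ∘ τ) :
    c2 K k m (a, b) (wd2 (K := K) x y) =
      ((Perm.sign τ : ℤ) : K) * c1 K k m a (wd1 (K := K) x) := by
  rw [wd2, c2_brM, psi2]
  rw [detForm_eq_single _ _ (ext0 τ) ?_]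
  · rw [sign_ext0, Fin.prod_univ_succ]
    simp only [rows2, ext0_zero, ext0_succ, Fin.cons_zero, Fin.cons_succ]
    have h1 : ∀ i : Fin (k + 1), c0 K k m (b i) (el K k m (y (τ i))) = 1 := by
      intro i
      rw [c0_el, if_pos (by rw [hb]; rfl)]
    simp [h1]
  · intro i j
    refine Fin.cases ?_ (fun i' => ?_) i <;> refine Fin.cases ?_ (fun j' => ?_) j <;>
      intro h <;> simp only [rows2, Fin.cons_zero, Fin.cons_succ] at h ⊢
    · rw [ext0_zero]
    · rw [c1_el] at h
      exact absurd rfl h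
    · rw [c0_wd1] at h
      exact absurd rfl h
    · rw [c0_el] at h
      have h2 := ite_one_ne_zero h
      rw [hb] at h2
      rw [ext0_succ]
      exact congrArg Fin.succ (hy h2).symm

theorem c2_wd2_zero (x : Fin (k + 2) → Fin m) {y b : Fin (k + 1) → Fin m}
    (hy : Function.Injective y) (a : J1 k m)
    (hno : ∀ τ : Perm (Fin (k + 1)), b ≠ y ∘ τ) :
    c2 K k m (a, b) (wd2 (K := K) x y) = 0 := by
  rw [wd2, c2_brM, psi2]
  by_cases h1 : ∀ i, ∃ j, b i = y j
  · by_cases h2 : ∀ j, ∃ i, b i = y j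
    · obtain ⟨τ, hτ⟩ := perm_of_sub hy h1 h2
      exact absurd hτ (hno τ)
    · push_neg at h2
      obtain ⟨j, hj⟩ := h2
      refine detForm_zero_col _ _ j.succ fun i => ?_
      refine Fin.cases ?_ (fun i' => ?_) i <;>
        simp only [rows2, Fin.cons_zero, Fin.cons_succ]
      · rw [c1_el]
      · rw [c0_el, if_neg (hj i')]
  · push_neg at h1
    obtain ⟨i, hi⟩ := h1
    refine detForm_zero_row _ _ i.succ fun j => ?_
    refine Fin.cases ?_ (fun j' => ?_) j <;>
      simp only [rows2, Fin.cons_zero, Fin.cons_succ]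
    · rw [c0_wd1]
    · rw [c0_el, if_neg (hi j')]

end WordVals

end LK12

namespace LK12

open Equiv LAnKe

section TopVals

variable {K : Type} [Field K] {k m : ℕ}

noncomputable def argsG1 (x : Fin (k + 2) → Fin m) (y z : Fin (k + 1) → Fin m) :
    Fin (k + 2) → LM K k m :=
  Fin.cons (wd2 x y) (fun i => el K k m (z i))

noncomputable def argsG2 (x y : Fin (k + 2) → Fin m) (z : Fin k → Fin m) :
    Fin (k + 2) → LM K k m :=
  Fin.cons (wd1 x) (Fin.cons (wd1 y) (fun i => el K k m (z i)))

theorem psi3_inl_argsG1_match {x : Fin (k + 2) → Fin m} {y z : Fin (k + 1) → Fin m}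
    (hz : Function.Injective z) (d : G1D (k + 2) m) (ρ : Perm (Fin (k + 1)))
    (hρ : d.z = z ∘ ρ) :
    psi3 K k m (Sum.inl d) (argsG1 (K := K) x y z) =
      ((Perm.sign ρ : ℤ) : K) * c2 K k m (d.x, d.y) (wd2 (K := K) x y) := by
  unfold psi3
  rw [detForm_eq_single _ _ (ext0 ρ) ?_]
  · rw [sign_ext0, Fin.prod_univ_succ]
    simp only [rows3, argsG1, ext0_zero, ext0_succ, Fin.cons_zero, Fin.cons_succ]
    have h1 : ∀ i : Fin (k + 1), c0 K k m (d.z i) (el K k m (z (ρ i))) = 1 := by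
      intro i
      rw [c0_el, if_pos (by rw [hρ]; rfl)]
    simp [h1]
  · intro i j
    refine Fin.cases ?_ (fun i' => ?_) i <;> refine Fin.cases ?_ (fun j' => ?_) j <;>
      intro h <;> simp only [rows3, argsG1, Fin.cons_zero, Fin.cons_succ] at h ⊢
    · rw [ext0_zero]
    · rw [c2_el] at h
      exact absurd rfl h
    · rw [c0_wd2] at h
      exact absurd rfl h
    · rw [c0_el] at h
      have h2 := ite_one_ne_zero h
      rw [hρ] at h2
      rw [ext0_succ]
      exact congrArg Fin.succ (hz h2).symm

theorem psi3_inl_argsG1_zero {x : Fin (k + 2) → Fin m} {y z : Fin (k + 1) → Fin m}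
    (hz : Function.Injective z) (d : G1D (k + 2) m)
    (hno : ∀ ρ : Perm (Fin (k + 1)), d.z ≠ z ∘ ρ) :
    psi3 K k m (Sum.inl d) (argsG1 (K := K) x y z) = 0 := by
  unfold psi3
  by_cases h1 : ∀ i, ∃ j, d.z i = z j
  · by_cases h2 : ∀ j, ∃ i, d.z i = z j
    · obtain ⟨ρ, hρ⟩ := perm_of_sub hz h1 h2
      exact absurd hρ (hno ρ)
    · push_neg at h2
      obtain ⟨j, hj⟩ := h2
      refine detForm_zero_col _ _ j.succ fun i => ?_
      refine Fin.cases ?_ (fun i' => ?_) i <;>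
        simp only [rows3, argsG1, Fin.cons_zero, Fin.cons_succ]
      · rw [c2_el]
      · rw [c0_el, if_neg (hj i')]
  · push_neg at h1
    obtain ⟨i, hi⟩ := h1
    refine detForm_zero_row _ _ i.succ fun j => ?_
    refine Fin.cases ?_ (fun j' => ?_) j <;>
      simp only [rows3, argsG1, Fin.cons_zero, Fin.cons_succ]
    · rw [c0_wd2]
    · rw [c0_el, if_neg (hi j')]

theorem psi3_inr_argsG1 {x : Fin (k + 2) → Fin m} {y z : Fin (k + 1) → Fin m}
    (d : G2D (k + 2) m) :
    psi3 K k m (Sum.inr d) (argsG1 (K := K) x y z) = 0 := by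
  unfold psi3
  refine detForm_zero_col _ _ 0 fun i => ?_
  refine Fin.cases ?_ (fun i' => ?_) i <;>
    simp only [rows3, argsG1, Fin.cons_zero, Fin.cons_succ]
  · rw [c1_wd2]
  · refine Fin.cases ?_ (fun i'' => ?_) i' <;> simp only [Fin.cons_zero, Fin.cons_succ]
    · rw [c1_wd2]
    · rw [c0_wd2]

theorem psi3_inl_argsG2 {x y : Fin (k + 2) → Fin m} {z : Fin k → Fin m}
    (d : G1D (k + 2) m) :
    psi3 K k m (Sum.inl d) (argsG2 (K := K) x y z) = 0 := by
  unfold psi3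
  refine detForm_zero_row _ _ 0 fun j => ?_
  refine Fin.cases ?_ (fun j' => ?_) j <;>
    simp only [rows3, argsG2, Fin.cons_zero, Fin.cons_succ]
  · rw [c2_wd1]
  · refine Fin.cases ?_ (fun j'' => ?_) j' <;> simp only [Fin.cons_zero, Fin.cons_succ]
    · rw [c2_wd1]
    · rw [c2_el]

theorem eπ_one (ρ : Perm (Fin k)) : ext0 (ext0 ρ) ((0 : Fin (k + 1)).succ) = 1 := by
  rw [ext0_succ, ext0_zero, Fin.succ_zero_eq_one]

noncomputable def swπ (ρ : Perm (Fin k)) : Perm (Fin (k + 2)) :=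
  Equiv.swap 0 1 * ext0 (ext0 ρ)

theorem swπ_zero (ρ : Perm (Fin k)) : swπ ρ 0 = 1 := by
  rw [swπ, Perm.mul_apply, ext0_zero, Equiv.swap_apply_left]

theorem swπ_one (ρ : Perm (Fin k)) : swπ ρ ((0 : Fin (k + 1)).succ) = 0 := by
  rw [swπ, Perm.mul_apply, eπ_one, Equiv.swap_apply_right]

theorem succ_succ_ne_zero (i : Fin k) : (i.succ.succ : Fin (k + 2)) ≠ 0 :=
  Fin.succ_ne_zero _

theorem succ_succ_ne_one (i : Fin k) : (i.succ.succ : Fin (k + 2)) ≠ 1 := by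
  intro h
  have := congrArg Fin.val h
  simp [Fin.val_succ] at this

theorem swπ_ss (ρ : Perm (Fin k)) (i : Fin k) : swπ ρ (i.succ.succ) = (ρ i).succ.succ := by
  rw [swπ, Perm.mul_apply, ext0_succ, ext0_succ,
    Equiv.swap_apply_of_ne_of_ne (succ_succ_ne_zero _) (succ_succ_ne_one _)]

theorem sign_swπ (ρ : Perm (Fin k)) :
    Perm.sign (swπ ρ) = - Perm.sign ρ := by
  rw [swπ, Perm.sign_mul, Equiv.Perm.sign_swap ?_, sign_ext0, sign_ext0]
  · rw [neg_one_mul]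
  · intro h
    have := congrArg Fin.val h
    simp at this

theorem psi3_inr_argsG2_straight {x y : Fin (k + 2) → Fin m} {z : Fin k → Fin m}
    (hx : Function.Injective x) (hy : Function.Injective y)
    (hz : Function.Injective z) (hdisj : ∀ i j, x i ≠ y j)
    (d : G2D (k + 2) m) (σ τ : Perm (Fin (k + 2))) (ρ : Perm (Fin k))
    (h1 : d.x = x ∘ σ) (h2 : d.y = y ∘ τ) (h3 : d.z = z ∘ ρ) :
    psi3 K k m (Sum.inr d) (argsG2 (K := K) x y z) =
      ((Perm.sign σ : ℤ) : K) * ((Perm.sign τ : ℤ) : K) * ((Perm.sign ρ : ℤ) : K) := by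
  have hxny : ∀ σ' : Perm (Fin (k + 2)), d.x ≠ y ∘ σ' := by
    intro σ' he
    exact hdisj (σ 0) (σ' 0) (by
      have := congrFun h1 0
      rw [he] at this
      exact this.symm)
  have hynx : ∀ τ' : Perm (Fin (k + 2)), d.y ≠ x ∘ τ' := by
    intro τ' he
    exact hdisj (τ' 0) (τ 0) (by
      have := congrFun h2 0
      rw [he] at this
      exact this)
  unfold psi3
  rw [detForm_eq_single _ _ (ext0 (ext0 ρ)) ?_]
  · rw [sign_ext0, sign_ext0, Fin.prod_univ_succ, Fin.prod_univ_succ]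
    simp only [rows3, argsG2, ext0_zero, eπ_one, ext0_succ, Fin.cons_zero, Fin.cons_succ]
    have e2 : ∀ i : Fin k, c0 K k m (d.z i) (el K k m (z (ρ i))) = 1 := by
      intro i
      rw [c0_el, if_pos (by rw [h3]; rfl)]
    rw [c1_wd1_match hx σ h1, c1_wd1_match hy τ h2]
    simp only [e2, Finset.prod_const_one, mul_one]
    ring
  · intro i j
    refine Fin.cases ?_ (fun i' => ?_) i
    · -- row 0 : c1 d.x
      refine Fin.cases ?_ (fun j' => ?_) j
      · intro _
        rw [ext0_zero]
      · intro h
        exfalso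
        simp only [rows3, argsG2, Fin.cons_zero, Fin.cons_succ] at h
        revert h
        refine Fin.cases ?_ (fun j'' => ?_) j' <;> intro h <;>
          simp only [Fin.cons_zero, Fin.cons_succ] at h
        · rw [c1_wd1_zero hy hxny] at h
          exact h rfl
        · rw [c1_el] at h
          exact h rfl
    · refine Fin.cases ?_ (fun i'' => ?_) i'
      · -- row 1 : c1 d.y
        refine Fin.cases ?_ (fun j' => ?_) j
        · intro h
          exfalso
          simp only [rows3, argsG2, Fin.cons_zero, Fin.cons_succ] at h
          rw [c1_wd1_zero hx hynx] at h
          exact h rfl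
        · intro h
          rw [eπ_one]
          simp only [rows3, argsG2, Fin.cons_zero, Fin.cons_succ] at h
          revert h
          refine Fin.cases ?_ (fun j'' => ?_) j' <;> intro h
          · rw [Fin.succ_zero_eq_one]
          · exfalso
            simp only [Fin.cons_succ] at h
            rw [c1_el] at h
            exact h rfl
      · -- letter rows
        refine Fin.cases ?_ (fun j' => ?_) j
        · intro h
          exfalso
          simp only [rows3, argsG2, Fin.cons_zero, Fin.cons_succ] at h
          rw [c0_wd1] at h
          exact h rfl
        · intro h
          simp only [rows3, argsG2, Fin.cons_zero, Fin.cons_succ] at h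
          revert h
          refine Fin.cases ?_ (fun j'' => ?_) j' <;> intro h <;>
            simp only [Fin.cons_zero, Fin.cons_succ] at h
          · exfalso
            rw [c0_wd1] at h
            exact h rfl
          · rw [c0_el] at h
            have hz2 := ite_one_ne_zero h
            rw [h3] at hz2
            rw [ext0_succ, ext0_succ]
            exact congrArg Fin.succ (congrArg Fin.succ (hz hz2).symm)

theorem psi3_inr_argsG2_swap {x y : Fin (k + 2) → Fin m} {z : Fin k → Fin m}
    (hx : Function.Injective x) (hy : Function.Injective y)
    (hz : Function.Injective z) (hdisj : ∀ i j, x i ≠ y j)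
    (d : G2D (k + 2) m) (σ τ : Perm (Fin (k + 2))) (ρ : Perm (Fin k))
    (h1 : d.x = y ∘ σ) (h2 : d.y = x ∘ τ) (h3 : d.z = z ∘ ρ) :
    psi3 K k m (Sum.inr d) (argsG2 (K := K) x y z) =
      -(((Perm.sign σ : ℤ) : K) * ((Perm.sign τ : ℤ) : K) * ((Perm.sign ρ : ℤ) : K)) := by
  have hxnx : ∀ σ' : Perm (Fin (k + 2)), d.x ≠ x ∘ σ' := by
    intro σ' he
    exact hdisj (σ' 0) (σ 0) (by
      have := congrFun h1 0
      rw [he] at this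
      exact this)
  have hyny : ∀ τ' : Perm (Fin (k + 2)), d.y ≠ y ∘ τ' := by
    intro τ' he
    exact hdisj (τ 0) (τ' 0) (by
      have := congrFun h2 0
      rw [he] at this
      exact this.symm)
  unfold psi3
  rw [detForm_eq_single _ _ (swπ ρ) ?_]
  · rw [sign_swπ, Fin.prod_univ_succ, Fin.prod_univ_succ]
    simp only [rows3, argsG2, swπ_zero, swπ_one, swπ_ss, Fin.cons_zero, Fin.cons_succ]
    have e2 : ∀ i : Fin k, c0 K k m (d.z i) (el K k m (z (ρ i))) = 1 := by
      intro i
      rw [c0_el, if_pos (by rw [h3]; rfl)]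
    have e1 : (Fin.cons (wd1 x) (Fin.cons (wd1 y) fun i => el K k m (z i)) :
        Fin (k + 2) → LM K k m) 1 = wd1 (K := K) y := by
      rw [← Fin.succ_zero_eq_one, Fin.cons_succ, Fin.cons_zero]
    rw [e1, c1_wd1_match hy σ h1, c1_wd1_match hx τ h2]
    simp only [e2, Finset.prod_const_one, mul_one, Units.val_neg, Int.cast_neg]
    ring
  · intro i j
    refine Fin.cases ?_ (fun i' => ?_) i
    · -- row 0 : c1 d.x  (matches wd1 y, column 1)
      refine Fin.cases ?_ (fun j' => ?_) j
      · intro h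
        exfalso
        simp only [rows3, argsG2, Fin.cons_zero, Fin.cons_succ] at h
        rw [c1_wd1_zero hx hxnx] at h
        exact h rfl
      · intro h
        rw [swπ_zero]
        simp only [rows3, argsG2, Fin.cons_zero, Fin.cons_succ] at h
        revert h
        refine Fin.cases ?_ (fun j'' => ?_) j' <;> intro h
        · rw [Fin.succ_zero_eq_one]
        · exfalso
          simp only [Fin.cons_succ] at h
          rw [c1_el] at h
          exact h rfl
    · refine Fin.cases ?_ (fun i'' => ?_) i'
      · -- row 1 : c1 d.y (matches wd1 x, column 0)
        refine Fin.cases ?_ (fun j' => ?_) j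
        · intro _
          rw [swπ_one]
        · intro h
          exfalso
          simp only [rows3, argsG2, Fin.cons_zero, Fin.cons_succ] at h
          revert h
          refine Fin.cases ?_ (fun j'' => ?_) j' <;> intro h <;>
            simp only [Fin.cons_zero, Fin.cons_succ] at h
          · rw [c1_wd1_zero hy hyny] at h
            exact h rfl
          · rw [c1_el] at h
            exact h rfl
      · -- letter rows
        refine Fin.cases ?_ (fun j' => ?_) j
        · intro h
          exfalso
          simp only [rows3, argsG2, Fin.cons_zero, Fin.cons_succ] at h
          rw [c0_wd1] at h
          exact h rfl
        · intro h
          simp only [rows3, argsG2, Fin.cons_zero, Fin.cons_succ] at h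
          revert h
          refine Fin.cases ?_ (fun j'' => ?_) j' <;> intro h <;>
            simp only [Fin.cons_zero, Fin.cons_succ] at h
          · exfalso
            rw [c0_wd1] at h
            exact h rfl
          · rw [c0_el] at h
            have hz2 := ite_one_ne_zero h
            rw [h3] at hz2
            rw [swπ_ss]
            exact congrArg Fin.succ (congrArg Fin.succ (hz hz2).symm)

theorem psi3_inr_argsG2_zero {x y : Fin (k + 2) → Fin m} {z : Fin k → Fin m}
    (hx : Function.Injective x) (hy : Function.Injective y)
    (hz : Function.Injective z) (hdisj : ∀ i j, x i ≠ y j)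
    (d : G2D (k + 2) m) (hd : ∀ i j, d.x i ≠ d.y j)
    (hnostraight : ¬ ∃ (σ τ : Perm (Fin (k + 2))) (ρ : Perm (Fin k)),
      d.x = x ∘ σ ∧ d.y = y ∘ τ ∧ d.z = z ∘ ρ)
    (hnoswap : ¬ ∃ (σ τ : Perm (Fin (k + 2))) (ρ : Perm (Fin k)),
      d.x = y ∘ σ ∧ d.y = x ∘ τ ∧ d.z = z ∘ ρ) :
    psi3 K k m (Sum.inr d) (argsG2 (K := K) x y z) = 0 := by
  unfold psi3
  by_cases hρ : ∃ ρ : Perm (Fin k), d.z = z ∘ ρ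
  · obtain ⟨ρ, hρ⟩ := hρ
    have zero_row_1 : (∀ τ' : Perm (Fin (k + 2)), d.y ≠ x ∘ τ') →
        (∀ τ' : Perm (Fin (k + 2)), d.y ≠ y ∘ τ') →
        detForm (rows3 K k m (Sum.inr d)) (argsG2 (K := K) x y z) = 0 := by
      intro hnx hny
      refine detForm_zero_row _ _ ((0 : Fin (k + 1)).succ) fun j => ?_
      refine Fin.cases ?_ (fun j' => ?_) j <;>
        simp only [rows3, argsG2, Fin.cons_zero, Fin.cons_succ]
      · rw [c1_wd1_zero hx hnx]
      · refine Fin.cases ?_ (fun j'' => ?_) j' <;> simp only [Fin.cons_zero, Fin.cons_succ]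
        · rw [c1_wd1_zero hy hny]
        · rw [c1_el]
    by_cases P1 : ∃ σ : Perm (Fin (k + 2)), d.x = x ∘ σ
    · obtain ⟨σ, hσ⟩ := P1
      by_cases Q2 : ∃ τ : Perm (Fin (k + 2)), d.y = y ∘ τ
      · obtain ⟨τ, hτ⟩ := Q2
        exact absurd ⟨σ, τ, ρ, hσ, hτ, hρ⟩ hnostraight
      · push_neg at Q2
        refine zero_row_1 ?_ Q2
        intro τ' he
        exact hd (σ⁻¹ (τ' 0)) 0 (by
          have hx1 : d.x (σ⁻¹ (τ' 0)) = x (τ' 0) := by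
            rw [hσ]
            simp
          have hy1 : d.y 0 = x (τ' 0) := congrFun he 0
          rw [hx1, ← hy1])
    · by_cases P2 : ∃ σ : Perm (Fin (k + 2)), d.x = y ∘ σ
      · obtain ⟨σ, hσ⟩ := P2
        by_cases Q1 : ∃ τ : Perm (Fin (k + 2)), d.y = x ∘ τ
        · obtain ⟨τ, hτ⟩ := Q1
          exact absurd ⟨σ, τ, ρ, hσ, hτ, hρ⟩ hnoswap
        · push_neg at Q1
          refine zero_row_1 Q1 ?_
          intro τ' he
          exact hd (σ⁻¹ (τ' 0)) 0 (by
            have hx1 : d.x (σ⁻¹ (τ' 0)) = y (τ' 0) := by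
              rw [hσ]
              simp
            have hy1 : d.y 0 = y (τ' 0) := congrFun he 0
            rw [hx1, ← hy1])
      · push_neg at P1
        push_neg at P2
        refine detForm_zero_row _ _ 0 fun j => ?_
        refine Fin.cases ?_ (fun j' => ?_) j <;>
          simp only [rows3, argsG2, Fin.cons_zero, Fin.cons_succ]
        · rw [c1_wd1_zero hx P1]
        · refine Fin.cases ?_ (fun j'' => ?_) j' <;>
            simp only [Fin.cons_zero, Fin.cons_succ]
          · rw [c1_wd1_zero hy P2]
          · rw [c1_el]
  · by_cases h1 : ∀ i : Fin k, ∃ j, d.z i = z j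
    · by_cases h2 : ∀ j : Fin k, ∃ i : Fin k, d.z i = z j
      · obtain ⟨ρ, hρ'⟩ := perm_of_sub (x := z) hz h1 h2
        exact absurd ⟨ρ, hρ'⟩ hρ
      · push_neg at h2
        obtain ⟨j, hj⟩ := h2
        refine detForm_zero_col _ _ j.succ.succ fun i => ?_
        refine Fin.cases ?_ (fun i' => ?_) i <;>
          simp only [rows3, argsG2, Fin.cons_zero, Fin.cons_succ]
        · rw [c1_el]
        · refine Fin.cases ?_ (fun i'' => ?_) i' <;>
            simp only [Fin.cons_zero, Fin.cons_succ]
          · rw [c1_el]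
          · rw [c0_el, if_neg (hj i'')]
    · push_neg at h1
      obtain ⟨i, hi⟩ := h1
      refine detForm_zero_row _ _ i.succ.succ fun j => ?_
      refine Fin.cases ?_ (fun j' => ?_) j <;>
        simp only [rows3, argsG2, Fin.cons_zero, Fin.cons_succ]
      · rw [c0_wd1]
      · refine Fin.cases ?_ (fun j'' => ?_) j' <;>
          simp only [Fin.cons_zero, Fin.cons_succ]
        · rw [c0_wd1]
        · rw [c0_el, if_neg (hi j'')]

end TopVals

end LK12

namespace LK12

open Equiv LAnKe

section MatchDef

variable {K : Type} [Field K] {k m : ℕ}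

theorem G1D_ext {d d' : G1D (k + 2) m} (hx : d.x = d'.x) (hy : d.y = d'.y)
    (hz : d.z = d'.z) : d = d' := by
  cases d; cases d'
  simp only at hx hy hz
  subst hx; subst hy; subst hz; rfl

theorem G2D_ext {d d' : G2D (k + 2) m} (hx : d.x = d'.x) (hy : d.y = d'.y)
    (hz : d.z = d'.z) : d = d' := by
  cases d; cases d'
  simp only at hx hy hz
  subst hx; subst hy; subst hz; rfl

theorem validG1_inj_x {x : Fin (k + 2) → Fin m} {y z : Fin (k + 2 - 1) → Fin m}
    (h : ValidG1 m x y z) : Function.Injective x := fun i j he => by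
  have := h (a₁ := Sum.inl i) (a₂ := Sum.inl j) he
  exact Sum.inl_injective this

theorem validG1_inj_y {x : Fin (k + 2) → Fin m} {y z : Fin (k + 2 - 1) → Fin m}
    (h : ValidG1 m x y z) : Function.Injective y := fun i j he => by
  have := h (a₁ := Sum.inr (Sum.inl i)) (a₂ := Sum.inr (Sum.inl j)) he
  exact Sum.inl_injective (Sum.inr_injective this)

theorem validG1_inj_z {x : Fin (k + 2) → Fin m} {y z : Fin (k + 2 - 1) → Fin m}
    (h : ValidG1 m x y z) : Function.Injective z := fun i j he => by
  have := h (a₁ := Sum.inr (Sum.inr i)) (a₂ := Sum.inr (Sum.inr j)) he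
  exact Sum.inr_injective (Sum.inr_injective this)

theorem validG2_inj_x {x y : Fin (k + 2) → Fin m} {z : Fin (k + 2 - 2) → Fin m}
    (h : ValidG2 m x y z) : Function.Injective x := fun i j he => by
  have := h (a₁ := Sum.inl i) (a₂ := Sum.inl j) he
  exact Sum.inl_injective this

theorem validG2_inj_y {x y : Fin (k + 2) → Fin m} {z : Fin (k + 2 - 2) → Fin m}
    (h : ValidG2 m x y z) : Function.Injective y := fun i j he => by
  have := h (a₁ := Sum.inr (Sum.inl i)) (a₂ := Sum.inr (Sum.inl j)) he
  exact Sum.inl_injective (Sum.inr_injective this)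

theorem validG2_inj_z {x y : Fin (k + 2) → Fin m} {z : Fin (k + 2 - 2) → Fin m}
    (h : ValidG2 m x y z) : Function.Injective z := fun i j he => by
  have := h (a₁ := Sum.inr (Sum.inr i)) (a₂ := Sum.inr (Sum.inr j)) he
  exact Sum.inr_injective (Sum.inr_injective this)

theorem validG2_disj {x y : Fin (k + 2) → Fin m} {z : Fin (k + 2 - 2) → Fin m}
    (h : ValidG2 m x y z) : ∀ i j, x i ≠ y j := fun i j he => by
  have := h (a₁ := Sum.inl i) (a₂ := Sum.inr (Sum.inl j)) he
  exact absurd this (by simp)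

/-- Two generators have the same letter content (blockwise, up to the `xy`-swap for
type (G2)). -/
def MatchG : GenT (k + 2) m → GenT (k + 2) m → Prop
  | Sum.inl d, Sum.inl d' =>
      ∃ (σ : Perm (Fin (k + 2))) (τ ρ : Perm (Fin (k + 1))),
        d'.x = d.x ∘ σ ∧ d'.y = d.y ∘ τ ∧ d'.z = d.z ∘ ρ
  | Sum.inr d, Sum.inr d' =>
      (∃ (σ τ : Perm (Fin (k + 2))) (ρ : Perm (Fin k)),
        d'.x = d.x ∘ σ ∧ d'.y = d.y ∘ τ ∧ d'.z = d.z ∘ ρ) ∨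
      (∃ (σ τ : Perm (Fin (k + 2))) (ρ : Perm (Fin k)),
        d'.x = d.y ∘ σ ∧ d'.y = d.x ∘ τ ∧ d'.z = d.z ∘ ρ)
  | _, _ => False

theorem comp_one {α : Type} {r : ℕ} (f : Fin r → α) : f ∘ ⇑(1 : Perm (Fin r)) = f := rfl

theorem comp_inv {α : Type} {r : ℕ} {f g : Fin r → α} (σ : Perm (Fin r))
    (h : g = f ∘ σ) : f = g ∘ ⇑σ⁻¹ := by
  funext i
  rw [h]
  simp

theorem comp_comp {α : Type} {r : ℕ} {f g h : Fin r → α} (σ τ : Perm (Fin r))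
    (h1 : g = f ∘ σ) (h2 : h = g ∘ τ) : h = f ∘ ⇑(σ * τ) := by
  funext i
  rw [h2, h1]
  rfl

theorem matchG_refl (g : GenT (k + 2) m) : MatchG g g := by
  cases g with
  | inl d => exact ⟨1, 1, 1, rfl, rfl, rfl⟩
  | inr d => exact Or.inl ⟨1, 1, 1, rfl, rfl, rfl⟩

theorem matchG_symm {g g' : GenT (k + 2) m} (h : MatchG g g') : MatchG g' g := by
  cases g with
  | inl d =>
    cases g' with
    | inl d' =>
      obtain ⟨σ, τ, ρ, h1, h2, h3⟩ := h
      exact ⟨σ⁻¹, τ⁻¹, ρ⁻¹, comp_inv σ h1, comp_inv τ h2, comp_inv ρ h3⟩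
    | inr d' => exact h.elim
  | inr d =>
    cases g' with
    | inl d' => exact h.elim
    | inr d' =>
      rcases h with ⟨σ, τ, ρ, h1, h2, h3⟩ | ⟨σ, τ, ρ, h1, h2, h3⟩
      · exact Or.inl ⟨σ⁻¹, τ⁻¹, ρ⁻¹, comp_inv σ h1, comp_inv τ h2, comp_inv ρ h3⟩
      · exact Or.inr ⟨τ⁻¹, σ⁻¹, ρ⁻¹, comp_inv τ h2, comp_inv σ h1, comp_inv ρ h3⟩

theorem matchG_trans {g g' g'' : GenT (k + 2) m} (h : MatchG g g') (h' : MatchG g' g'') :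
    MatchG g g'' := by
  cases g with
  | inl d =>
    cases g' with
    | inl d' =>
      cases g'' with
      | inl d'' =>
        obtain ⟨σ, τ, ρ, h1, h2, h3⟩ := h
        obtain ⟨σ', τ', ρ', h1', h2', h3'⟩ := h'
        exact ⟨σ * σ', τ * τ', ρ * ρ', comp_comp σ σ' h1 h1', comp_comp τ τ' h2 h2',
          comp_comp ρ ρ' h3 h3'⟩
      | inr d'' => exact h'.elim
    | inr d' => exact h.elim
  | inr d =>
    cases g' with
    | inl d' => exact h.elim
    | inr d' =>
      cases g'' with
      | inl d'' => exact h'.elim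
      | inr d'' =>
        rcases h with ⟨σ, τ, ρ, h1, h2, h3⟩ | ⟨σ, τ, ρ, h1, h2, h3⟩ <;>
          rcases h' with ⟨σ', τ', ρ', h1', h2', h3'⟩ | ⟨σ', τ', ρ', h1', h2', h3'⟩
        · exact Or.inl ⟨σ * σ', τ * τ', ρ * ρ', comp_comp σ σ' h1 h1',
            comp_comp τ τ' h2 h2', comp_comp ρ ρ' h3 h3'⟩
        · exact Or.inr ⟨τ * σ', σ * τ', ρ * ρ', comp_comp τ σ' h2 h1',
            comp_comp σ τ' h1 h2', comp_comp ρ ρ' h3 h3'⟩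
        · exact Or.inr ⟨σ * σ', τ * τ', ρ * ρ', comp_comp σ σ' h1 h1',
            comp_comp τ τ' h2 h2', comp_comp ρ ρ' h3 h3'⟩
        · exact Or.inl ⟨τ * σ', σ * τ', ρ * ρ', comp_comp τ σ' h2 h1',
            comp_comp σ τ' h1 h2', comp_comp ρ ρ' h3 h3'⟩

/-- The model arguments of a generator. -/
noncomputable def argsOf : GenT (k + 2) m → (Fin (k + 2) → LM K k m)
  | Sum.inl d => argsG1 (K := K) d.x d.y d.z
  | Sum.inr d => argsG2 (K := K) d.x d.y d.z

theorem psi3_argsOf_zero (g g' : GenT (k + 2) m) (hno : ¬ MatchG g g') :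
    psi3 K k m g' (argsOf (K := K) g) = 0 := by
  cases g with
  | inl d =>
    cases g' with
    | inl d' =>
      rw [argsOf]
      by_cases hρ : ∃ ρ : Perm (Fin (k + 1)), d'.z = d.z ∘ ρ
      · obtain ⟨ρ, hρ⟩ := hρ
        rw [psi3_inl_argsG1_match (validG1_inj_z d.valid) d' ρ hρ]
        by_cases hτ : ∃ τ : Perm (Fin (k + 1)), d'.y = d.y ∘ τ
        · obtain ⟨τ, hτ⟩ := hτ
          rw [c2_wd2_match d.x (validG1_inj_y d.valid) d'.x τ hτ]
          by_cases hσ : ∃ σ : Perm (Fin (k + 2)), d'.x = d.x ∘ σ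
          · obtain ⟨σ, hσ⟩ := hσ
            exact absurd ⟨σ, τ, ρ, hσ, hτ, hρ⟩ hno
          · rw [c1_wd1_zero (validG1_inj_x d.valid) (fun σ h => hσ ⟨σ, h⟩), mul_zero,
              mul_zero]
        · rw [c2_wd2_zero d.x (validG1_inj_y d.valid) d'.x (fun τ h => hτ ⟨τ, h⟩),
            mul_zero]
      · exact psi3_inl_argsG1_zero (validG1_inj_z d.valid) d' (fun ρ h => hρ ⟨ρ, h⟩)
    | inr d' =>
      rw [argsOf]
      exact psi3_inr_argsG1 d'
  | inr d =>
    cases g' with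
    | inl d' =>
      rw [argsOf]
      exact psi3_inl_argsG2 d'
    | inr d' =>
      rw [argsOf]
      refine psi3_inr_argsG2_zero (validG2_inj_x d.valid) (validG2_inj_y d.valid)
        (validG2_inj_z d.valid) (validG2_disj d.valid) d' (validG2_disj d'.valid) ?_ ?_
      · intro ⟨σ, τ, ρ, h1, h2, h3⟩
        exact hno (Or.inl ⟨σ, τ, ρ, h1, h2, h3⟩)
      · intro ⟨σ, τ, ρ, h1, h2, h3⟩
        exact hno (Or.inr ⟨σ, τ, ρ, h1, h2, h3⟩)

end MatchDef

end LK12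

namespace LK12

open Equiv LAnKe

section QSide

variable {K : Type} [Field K] [CharZero K] {k m : ℕ}
variable {R : Submodule K (GenT (k + 2) m →₀ K)}

theorem q_of_mem {a b : GenT (k + 2) m →₀ K} (h : a - b ∈ R) : R.mkQ a = R.mkQ b := by
  have h0 : R.mkQ (a - b) = 0 := by
    rw [Submodule.mkQ_apply]
    exact (Submodule.Quotient.mk_eq_zero R).mpr h
  rw [map_sub] at h0
  exact sub_eq_zero.mp h0

theorem q_of_mem_add {a b : GenT (k + 2) m →₀ K} (h : a + b ∈ R) : R.mkQ a = - R.mkQ b := by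
  have h0 : R.mkQ (a + b) = 0 := by
    rw [Submodule.mkQ_apply]
    exact (Submodule.Quotient.mk_eq_zero R).mpr h
  rw [map_add] at h0
  exact eq_neg_of_add_eq_zero_left h0

/-- The seven families of relators belong to `R`. -/
structure RelMem (R : Submodule K (GenT (k + 2) m →₀ K)) : Prop where
  h1 : ∀ (d d' : G1D (k + 2) m) (σ : Perm (Fin (k + 2))), d'.x = d.x ∘ σ → d'.y = d.y →
    d'.z = d.z → Finsupp.single (Sum.inl d) 1 -
      ((Perm.sign σ : ℤ) : K) • Finsupp.single (Sum.inl d') 1 ∈ R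
  h2 : ∀ (d d' : G1D (k + 2) m) (τ : Perm (Fin (k + 1))), d'.x = d.x → d'.y = d.y ∘ τ →
    d'.z = d.z → Finsupp.single (Sum.inl d) 1 -
      ((Perm.sign τ : ℤ) : K) • Finsupp.single (Sum.inl d') 1 ∈ R
  h3 : ∀ (d d' : G1D (k + 2) m) (τ : Perm (Fin (k + 1))), d'.x = d.x → d'.y = d.y →
    d'.z = d.z ∘ τ → Finsupp.single (Sum.inl d) 1 -
      ((Perm.sign τ : ℤ) : K) • Finsupp.single (Sum.inl d') 1 ∈ R
  h4 : ∀ (d d' : G2D (k + 2) m) (σ : Perm (Fin (k + 2))), d'.x = d.x ∘ σ → d'.y = d.y →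
    d'.z = d.z → Finsupp.single (Sum.inr d) 1 -
      ((Perm.sign σ : ℤ) : K) • Finsupp.single (Sum.inr d') 1 ∈ R
  h5 : ∀ (d d' : G2D (k + 2) m) (σ : Perm (Fin (k + 2))), d'.x = d.x → d'.y = d.y ∘ σ →
    d'.z = d.z → Finsupp.single (Sum.inr d) 1 -
      ((Perm.sign σ : ℤ) : K) • Finsupp.single (Sum.inr d') 1 ∈ R
  h6 : ∀ (d d' : G2D (k + 2) m) (τ : Perm (Fin k)), d'.x = d.x → d'.y = d.y →
    d'.z = d.z ∘ τ → Finsupp.single (Sum.inr d) 1 -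
      ((Perm.sign τ : ℤ) : K) • Finsupp.single (Sum.inr d') 1 ∈ R
  h7 : ∀ (d d' : G2D (k + 2) m), d'.x = d.y → d'.y = d.x → d'.z = d.z →
    Finsupp.single (Sum.inr d) 1 + Finsupp.single (Sum.inr d') 1 ∈ R

theorem q_match (hR : RelMem R) {g g' : GenT (k + 2) m} (h : MatchG g g') :
    R.mkQ (Finsupp.single g 1) =
      psi3 K k m g' (argsOf (K := K) g) • R.mkQ (Finsupp.single g' 1) := by
  cases g with
  | inl d =>
    cases g' with
    | inl d' =>
      obtain ⟨σ, τ, ρ, e1, e2, e3⟩ := h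
      have hval : psi3 K k m (Sum.inl d') (argsOf (K := K) (Sum.inl d)) =
          ((Perm.sign ρ : ℤ) : K) * (((Perm.sign τ : ℤ) : K) * ((Perm.sign σ : ℤ) : K)) := by
        rw [argsOf, psi3_inl_argsG1_match (validG1_inj_z d.valid) d' ρ e3,
          c2_wd2_match d.x (validG1_inj_y d.valid) d'.x τ e2,
          c1_wd1_match (validG1_inj_x d.valid) σ e1]
      have hd1 : ValidG1 (n := k + 2) m (d.x ∘ σ) d.y d.z :=
        validG1_comp d.x d.y d.z d.valid σ 1 1
      have hd2 : ValidG1 (n := k + 2) m (d.x ∘ σ) (d.y ∘ τ) d.z :=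
        validG1_comp d.x d.y d.z d.valid σ τ 1
      have hd3 : ValidG1 (n := k + 2) m (d.x ∘ σ) (d.y ∘ τ) (d.z ∘ ρ) :=
        validG1_comp d.x d.y d.z d.valid σ τ ρ
      set d1 : G1D (k + 2) m := ⟨d.x ∘ σ, d.y, d.z, hd1⟩ with hd1'
      set d2 : G1D (k + 2) m := ⟨d.x ∘ σ, d.y ∘ τ, d.z, hd2⟩ with hd2'
      set d3 : G1D (k + 2) m := ⟨d.x ∘ σ, d.y ∘ τ, d.z ∘ ρ, hd3⟩ with hd3'
      have hde : d3 = d' := G1D_ext e1.symm e2.symm e3.symm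
      have q1 : R.mkQ (Finsupp.single (Sum.inl d) 1) =
          ((Perm.sign σ : ℤ) : K) • R.mkQ (Finsupp.single (Sum.inl d1) 1) := by
        rw [← map_smul]
        exact q_of_mem (hR.h1 d d1 σ rfl rfl rfl)
      have q2 : R.mkQ (Finsupp.single (Sum.inl d1) 1) =
          ((Perm.sign τ : ℤ) : K) • R.mkQ (Finsupp.single (Sum.inl d2) 1) := by
        rw [← map_smul]
        exact q_of_mem (hR.h2 d1 d2 τ rfl rfl rfl)
      have q3 : R.mkQ (Finsupp.single (Sum.inl d2) 1) =
          ((Perm.sign ρ : ℤ) : K) • R.mkQ (Finsupp.single (Sum.inl d3) 1) := by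
        rw [← map_smul]
        exact q_of_mem (hR.h3 d2 d3 ρ rfl rfl rfl)
      rw [hval, q1, q2, q3, hde, smul_smul, smul_smul]
      ring_nf
    | inr d' => exact h.elim
  | inr d =>
    cases g' with
    | inl d' => exact h.elim
    | inr d' =>
      have hdisj := validG2_disj d.valid
      rcases h with ⟨σ, τ, ρ, e1, e2, e3⟩ | ⟨σ, τ, ρ, e1, e2, e3⟩
      · have hval : psi3 K k m (Sum.inr d') (argsOf (K := K) (Sum.inr d)) =
            ((Perm.sign σ : ℤ) : K) * ((Perm.sign τ : ℤ) : K) * ((Perm.sign ρ : ℤ) : K) := by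
          rw [argsOf]
          exact psi3_inr_argsG2_straight (validG2_inj_x d.valid) (validG2_inj_y d.valid)
            (validG2_inj_z d.valid) hdisj d' σ τ ρ e1 e2 e3
        have hd1 : ValidG2 (n := k + 2) m (d.x ∘ σ) d.y d.z :=
          validG2_comp d.x d.y d.z d.valid σ 1 1
        have hd2 : ValidG2 (n := k + 2) m (d.x ∘ σ) (d.y ∘ τ) d.z :=
          validG2_comp d.x d.y d.z d.valid σ τ 1
        have hd3 : ValidG2 (n := k + 2) m (d.x ∘ σ) (d.y ∘ τ) (d.z ∘ ρ) :=
          validG2_comp d.x d.y d.z d.valid σ τ ρ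
        set d1 : G2D (k + 2) m := ⟨d.x ∘ σ, d.y, d.z, hd1⟩ with hd1'
        set d2 : G2D (k + 2) m := ⟨d.x ∘ σ, d.y ∘ τ, d.z, hd2⟩ with hd2'
        set d3 : G2D (k + 2) m := ⟨d.x ∘ σ, d.y ∘ τ, d.z ∘ ρ, hd3⟩ with hd3'
        have hde : d3 = d' := G2D_ext e1.symm e2.symm e3.symm
        have q1 : R.mkQ (Finsupp.single (Sum.inr d) 1) =
            ((Perm.sign σ : ℤ) : K) • R.mkQ (Finsupp.single (Sum.inr d1) 1) := by
          rw [← map_smul]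
          exact q_of_mem (hR.h4 d d1 σ rfl rfl rfl)
        have q2 : R.mkQ (Finsupp.single (Sum.inr d1) 1) =
            ((Perm.sign τ : ℤ) : K) • R.mkQ (Finsupp.single (Sum.inr d2) 1) := by
          rw [← map_smul]
          exact q_of_mem (hR.h5 d1 d2 τ rfl rfl rfl)
        have q3 : R.mkQ (Finsupp.single (Sum.inr d2) 1) =
            ((Perm.sign ρ : ℤ) : K) • R.mkQ (Finsupp.single (Sum.inr d3) 1) := by
          rw [← map_smul]
          exact q_of_mem (hR.h6 d2 d3 ρ rfl rfl rfl)
        rw [hval, q1, q2, q3, hde, smul_smul, smul_smul]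
      · have hval : psi3 K k m (Sum.inr d') (argsOf (K := K) (Sum.inr d)) =
            -(((Perm.sign σ : ℤ) : K) * ((Perm.sign τ : ℤ) : K) *
              ((Perm.sign ρ : ℤ) : K)) := by
          rw [argsOf]
          exact psi3_inr_argsG2_swap (validG2_inj_x d.valid) (validG2_inj_y d.valid)
            (validG2_inj_z d.valid) hdisj d' σ τ ρ e1 e2 e3
        have hdsw : ValidG2 (n := k + 2) m d.y d.x d.z := validG2_swap d.x d.y d.z d.valid
        set dsw : G2D (k + 2) m := ⟨d.y, d.x, d.z, hdsw⟩ with hdsw'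
        have q0 : R.mkQ (Finsupp.single (Sum.inr d) 1) =
            - R.mkQ (Finsupp.single (Sum.inr dsw) 1) :=
          q_of_mem_add (hR.h7 d dsw rfl rfl rfl)
        have hd1 : ValidG2 (n := k + 2) m (d.y ∘ σ) d.x d.z :=
          validG2_comp d.y d.x d.z hdsw σ 1 1
        have hd2 : ValidG2 (n := k + 2) m (d.y ∘ σ) (d.x ∘ τ) d.z :=
          validG2_comp d.y d.x d.z hdsw σ τ 1
        have hd3 : ValidG2 (n := k + 2) m (d.y ∘ σ) (d.x ∘ τ) (d.z ∘ ρ) :=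
          validG2_comp d.y d.x d.z hdsw σ τ ρ
        set d1 : G2D (k + 2) m := ⟨d.y ∘ σ, d.x, d.z, hd1⟩ with hd1'
        set d2 : G2D (k + 2) m := ⟨d.y ∘ σ, d.x ∘ τ, d.z, hd2⟩ with hd2'
        set d3 : G2D (k + 2) m := ⟨d.y ∘ σ, d.x ∘ τ, d.z ∘ ρ, hd3⟩ with hd3'
        have hde : d3 = d' := G2D_ext e1.symm e2.symm e3.symm
        have q1 : R.mkQ (Finsupp.single (Sum.inr dsw) 1) =
            ((Perm.sign σ : ℤ) : K) • R.mkQ (Finsupp.single (Sum.inr d1) 1) := by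
          rw [← map_smul]
          exact q_of_mem (hR.h4 dsw d1 σ rfl rfl rfl)
        have q2 : R.mkQ (Finsupp.single (Sum.inr d1) 1) =
            ((Perm.sign τ : ℤ) : K) • R.mkQ (Finsupp.single (Sum.inr d2) 1) := by
          rw [← map_smul]
          exact q_of_mem (hR.h5 d1 d2 τ rfl rfl rfl)
        have q3 : R.mkQ (Finsupp.single (Sum.inr d2) 1) =
            ((Perm.sign ρ : ℤ) : K) • R.mkQ (Finsupp.single (Sum.inr d3) 1) := by
          rw [← map_smul]
          exact q_of_mem (hR.h6 d2 d3 ρ rfl rfl rfl)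
        rw [hval, q0, q1, q2, q3, hde, smul_smul, smul_smul, neg_smul, ← neg_smul]

/-- The size of the content class of a generator. -/
noncomputable def Nc (g : GenT (k + 2) m) : ℕ :=
  Nat.card {g' : GenT (k + 2) m // MatchG g g'}

theorem Nc_eq {g h : GenT (k + 2) m} (hm : MatchG g h) : Nc (k := k) (m := m) g = Nc h :=
  Nat.card_congr (Equiv.subtypeEquivRight fun g' =>
    ⟨fun hg => matchG_trans (matchG_symm hm) hg, fun hh => matchG_trans hm hh⟩)

theorem Nc_pos (g : GenT (k + 2) m) : 0 < Nc (k := k) (m := m) g := by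
  have : Nonempty {g' : GenT (k + 2) m // MatchG g g'} := ⟨⟨g, matchG_refl g⟩⟩
  exact Nat.card_pos

theorem key_eval (hR : RelMem R) (g : GenT (k + 2) m) :
    Finsupp.linearCombination K
      (fun g' : GenT (k + 2) m => ((Nc g' : K))⁻¹ • R.mkQ (Finsupp.single g' 1))
      (pr3 K k m (brM K k m (argsOf (K := K) g))) = R.mkQ (Finsupp.single g 1) := by
  classical
  rw [pr3_brM, map_sum]
  have hterm : ∀ g' : GenT (k + 2) m,
      Finsupp.linearCombination K
        (fun g'' : GenT (k + 2) m => ((Nc g'' : K))⁻¹ • R.mkQ (Finsupp.single g'' 1))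
        (psi3 K k m g' (argsOf (K := K) g) • Finsupp.single g' 1) =
      if MatchG g g' then ((Nc g : K))⁻¹ • R.mkQ (Finsupp.single g 1) else 0 := by
    intro g'
    rw [map_smul, Finsupp.linearCombination_single, one_smul]
    by_cases hm : MatchG g g'
    · rw [if_pos hm, ← Nc_eq hm, smul_comm, ← q_match hR hm]
    · rw [if_neg hm, psi3_argsOf_zero g g' hm, zero_smul]
  rw [Finset.sum_congr rfl fun g' _ => hterm g']
  rw [Finset.sum_ite, Finset.sum_const, Finset.sum_const_zero, add_zero]
  have hcard : (Finset.univ.filter fun g' => MatchG g g').card = Nc (k := k) (m := m) g := by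
    rw [Nc, Nat.card_eq_fintype_card, Fintype.card_subtype]
  rw [hcard, ← Nat.cast_smul_eq_nsmul K, smul_smul, mul_inv_cancel₀, one_smul]
  exact Nat.cast_ne_zero.mpr (Nc_pos g).ne'

end QSide

end LK12

namespace LK12

open Equiv LAnKe

section KerLe

variable {K : Type} [Field K] [CharZero K] {k m : ℕ}
variable {R : Submodule K (GenT (k + 2) m →₀ K)}

theorem ker_le_R {A : Type} [AddCommGroup A] [Module K A]
    (br : AlternatingMap K A A (Fin (k + 2))) (ι : Fin m → A)
    (hfreeA : IsFreeAnti K br ι) (hR : RelMem R) (c : GenT (k + 2) m →₀ K)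
    (hc : Finsupp.linearCombination K (interp K br ι) c = 0) : c ∈ R := by
  obtain ⟨F, ⟨hFhom, hFι⟩, -⟩ := hfreeA (LM K k m) (brM K k m) (el K k m)
  have hword : ∀ g : GenT (k + 2) m,
      F (interp K br ι g) = brM K k m (argsOf (K := K) g) := by
    intro g
    cases g with
    | inl d =>
      have ex : (fun i => F ((ι ∘ d.x) i)) = fun i => el K k m (d.x i) := by
        funext i
        exact hFι (d.x i)
      have ey : (fun i => F ((ι ∘ d.y) i)) = fun i => el K k m (d.y i) := by
        funext i
        exact hFι (d.y i)
      have ez : (fun i => F ((ι ∘ d.z) i)) = fun i => el K k m (d.z i) := by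
        funext i
        exact hFι (d.z i)
      have e1 : F (br (ι ∘ d.x)) = wd1 (K := K) d.x := by
        rw [hFhom, ex, wd1]
      have e2 : F (app1 K br (br (ι ∘ d.x)) (ι ∘ d.y)) = wd2 (K := K) d.x d.y := by
        rw [app1, hFhom, comp_consF, consF_eq_cons, e1, ey, wd2]
        exact rfl
      show F (wG1 K br ι d.x d.y d.z) = _
      rw [wG1, w1, app1, hFhom, comp_consF, consF_eq_cons, e2, ez, argsOf, argsG1]
      exact rfl
    | inr d =>
      have ex : (fun i => F ((ι ∘ d.x) i)) = fun i => el K k m (d.x i) := by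
        funext i
        exact hFι (d.x i)
      have ey : (fun i => F ((ι ∘ d.y) i)) = fun i => el K k m (d.y i) := by
        funext i
        exact hFι (d.y i)
      have ez : (fun i => F ((ι ∘ d.z) i)) = fun i => el K k m (d.z i) := by
        funext i
        exact hFι (d.z i)
      have e1x : F (br (ι ∘ d.x)) = wd1 (K := K) d.x := by
        rw [hFhom, ex, wd1]
      have e1y : F (br (ι ∘ d.y)) = wd1 (K := K) d.y := by
        rw [hFhom, ey, wd1]
      show F (wG2 K br ι d.x d.y d.z) = _
      rw [wG2, w2, app2, hFhom, comp_cons2F, cons2F_eq_cons, e1x, e1y, ez, argsOf, argsG2]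
      exact rfl
  have hc0 : Finsupp.linearCombination K
      (fun g : GenT (k + 2) m => brM K k m (argsOf (K := K) g)) c = 0 := by
    have h1 : (fun g : GenT (k + 2) m => brM K k m (argsOf (K := K) g)) =
        F ∘ (interp K br ι) := by
      funext g
      exact (hword g).symm
    rw [h1, ← Finsupp.apply_linearCombination, hc, map_zero]
  have hT : (Finsupp.linearCombination K
        (fun g' : GenT (k + 2) m => ((Nc g' : K))⁻¹ • R.mkQ (Finsupp.single g' 1))).comp
      ((pr3 K k m).comp (Finsupp.linearCombination K
        (fun g : GenT (k + 2) m => brM K k m (argsOf (K := K) g)))) = R.mkQ := by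
    apply Finsupp.lhom_ext
    intro g b
    simp only [LinearMap.comp_apply, Finsupp.linearCombination_single]
    rw [map_smul, map_smul, key_eval hR g, ← map_smul, Finsupp.smul_single, smul_eq_mul,
      mul_one]
  have hqc : R.mkQ c = 0 := by
    rw [← hT]
    simp only [LinearMap.comp_apply]
    rw [hc0, map_zero, map_zero]
  rwa [Submodule.mkQ_apply, Submodule.Quotient.mk_eq_zero] at hqc

end KerLe

end LK12

open LAnKe in
/-- Lemma 5.2.  Let `n ≥ 2` and `m = 3n-2`.  The subspace of `W`
consisting of all relations satisfied by the generators (G1) and (G2) — that is, the kernel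
of the canonical map from the free vector space on the bracketed permutations to the free
anticommutative `n`-ary algebra — is spanned by the seven families of elements listed in
Lemma 5.2: antisymmetry in the `x`'s, `y`'s and `z`'s of (G1), antisymmetry in the
`x`'s, `y`'s and `z`'s of (G2), and the swap `(G2) + [[y],[x],z]`. -/
theorem statement_12 (K : Type) [Field K] [CharZero K] (n m : ℕ) (hn : 2 ≤ n)
    (hm : m = 3 * n - 2) (A : Type) [AddCommGroup A] [Module K A]
    (br : AlternatingMap K A A (Fin n)) (ι : Fin m → A)
    (hfreeA : IsFreeAnti K br ι) :
    LinearMap.ker (toW K br ι) =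
      Submodule.span K
        ({r : GenT n m →₀ K | ∃ (d d' : G1D n m) (σ : Equiv.Perm (Fin n)),
            d'.x = d.x ∘ σ ∧ d'.y = d.y ∧ d'.z = d.z ∧
            r = Finsupp.single (Sum.inl d) 1 -
              ((Equiv.Perm.sign σ : ℤ) : K) • Finsupp.single (Sum.inl d') 1} ∪
          {r | ∃ (d d' : G1D n m) (τ : Equiv.Perm (Fin (n - 1))),
            d'.x = d.x ∧ d'.y = d.y ∘ τ ∧ d'.z = d.z ∧
            r = Finsupp.single (Sum.inl d) 1 -
              ((Equiv.Perm.sign τ : ℤ) : K) • Finsupp.single (Sum.inl d') 1} ∪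
          {r | ∃ (d d' : G1D n m) (τ : Equiv.Perm (Fin (n - 1))),
            d'.x = d.x ∧ d'.y = d.y ∧ d'.z = d.z ∘ τ ∧
            r = Finsupp.single (Sum.inl d) 1 -
              ((Equiv.Perm.sign τ : ℤ) : K) • Finsupp.single (Sum.inl d') 1} ∪
          {r | ∃ (d d' : G2D n m) (σ : Equiv.Perm (Fin n)),
            d'.x = d.x ∘ σ ∧ d'.y = d.y ∧ d'.z = d.z ∧
            r = Finsupp.single (Sum.inr d) 1 -
              ((Equiv.Perm.sign σ : ℤ) : K) • Finsupp.single (Sum.inr d') 1} ∪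
          {r | ∃ (d d' : G2D n m) (σ : Equiv.Perm (Fin n)),
            d'.x = d.x ∧ d'.y = d.y ∘ σ ∧ d'.z = d.z ∧
            r = Finsupp.single (Sum.inr d) 1 -
              ((Equiv.Perm.sign σ : ℤ) : K) • Finsupp.single (Sum.inr d') 1} ∪
          {r | ∃ (d d' : G2D n m) (τ : Equiv.Perm (Fin (n - 2))),
            d'.x = d.x ∧ d'.y = d.y ∧ d'.z = d.z ∘ τ ∧
            r = Finsupp.single (Sum.inr d) 1 -
              ((Equiv.Perm.sign τ : ℤ) : K) • Finsupp.single (Sum.inr d') 1} ∪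
          {r | ∃ (d d' : G2D n m),
            d'.x = d.y ∧ d'.y = d.x ∧ d'.z = d.z ∧
            r = Finsupp.single (Sum.inr d) 1 + Finsupp.single (Sum.inr d') 1}) := by
  obtain ⟨k, rfl⟩ : ∃ k, n = k + 2 := ⟨n - 2, by omega⟩
  apply le_antisymm
  · intro c hc
    refine LK12.ker_le_R br ι hfreeA ⟨?_, ?_, ?_, ?_, ?_, ?_, ?_⟩ c (LinearMap.mem_ker.mp hc)
    · intro d d' σ h1 h2 h3
      exact Submodule.subset_span (Set.mem_union_left _ (Set.mem_union_left _
        (Set.mem_union_left _ (Set.mem_union_left _ (Set.mem_union_left _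
        (Set.mem_union_left _ ⟨d, d', σ, h1, h2, h3, rfl⟩))))))
    · intro d d' τ h1 h2 h3
      exact Submodule.subset_span (Set.mem_union_left _ (Set.mem_union_left _
        (Set.mem_union_left _ (Set.mem_union_left _ (Set.mem_union_left _
        (Set.mem_union_right _ ⟨d, d', τ, h1, h2, h3, rfl⟩))))))
    · intro d d' τ h1 h2 h3
      exact Submodule.subset_span (Set.mem_union_left _ (Set.mem_union_left _
        (Set.mem_union_left _ (Set.mem_union_left _ (Set.mem_union_right _
        ⟨d, d', τ, h1, h2, h3, rfl⟩)))))
    · intro d d' σ h1 h2 h3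
      exact Submodule.subset_span (Set.mem_union_left _ (Set.mem_union_left _
        (Set.mem_union_left _ (Set.mem_union_right _ ⟨d, d', σ, h1, h2, h3, rfl⟩))))
    · intro d d' σ h1 h2 h3
      exact Submodule.subset_span (Set.mem_union_left _ (Set.mem_union_left _
        (Set.mem_union_right _ ⟨d, d', σ, h1, h2, h3, rfl⟩)))
    · intro d d' τ h1 h2 h3
      exact Submodule.subset_span (Set.mem_union_left _ (Set.mem_union_right _
        ⟨d, d', τ, h1, h2, h3, rfl⟩))
    · intro d d' h1 h2 h3
      exact Submodule.subset_span (Set.mem_union_right _ ⟨d, d', h1, h2, h3, rfl⟩)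
  · rw [Submodule.span_le]
    rintro r ((((((hr | hr) | hr) | hr) | hr) | hr) | hr)
    all_goals
      simp only [Set.mem_setOf_eq] at hr
      simp only [SetLike.mem_coe, LinearMap.mem_ker]
    · obtain ⟨d, d', σ, hx, hy, hz, rfl⟩ := hr
      erw [map_sub, map_smul, toW, Finsupp.linearCombination_single,
        Finsupp.linearCombination_single, one_smul, one_smul]
      show interp K br ι (Sum.inl d) - _ • interp K br ι (Sum.inl d') = 0
      rw [interp, interp, hx, hy, hz, LK12.wG1_permx', smul_smul, LK12.sign_mul_self_cast,
        one_smul, sub_self]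
    · obtain ⟨d, d', τ, hx, hy, hz, rfl⟩ := hr
      erw [map_sub, map_smul, toW, Finsupp.linearCombination_single,
        Finsupp.linearCombination_single, one_smul, one_smul]
      show interp K br ι (Sum.inl d) - _ • interp K br ι (Sum.inl d') = 0
      rw [interp, interp, hx, hy, hz, LK12.wG1_permy', smul_smul, LK12.sign_mul_self_cast,
        one_smul, sub_self]
    · obtain ⟨d, d', τ, hx, hy, hz, rfl⟩ := hr
      erw [map_sub, map_smul, toW, Finsupp.linearCombination_single,
        Finsupp.linearCombination_single, one_smul, one_smul]
      show interp K br ι (Sum.inl d) - _ • interp K br ι (Sum.inl d') = 0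
      rw [interp, interp, hx, hy, hz, LK12.wG1_permz', smul_smul, LK12.sign_mul_self_cast,
        one_smul, sub_self]
    · obtain ⟨d, d', σ, hx, hy, hz, rfl⟩ := hr
      erw [map_sub, map_smul, toW, Finsupp.linearCombination_single,
        Finsupp.linearCombination_single, one_smul, one_smul]
      show interp K br ι (Sum.inr d) - _ • interp K br ι (Sum.inr d') = 0
      rw [interp, interp, hx, hy, hz, LK12.wG2_permx', smul_smul, LK12.sign_mul_self_cast,
        one_smul, sub_self]
    · obtain ⟨d, d', σ, hx, hy, hz, rfl⟩ := hr
      erw [map_sub, map_smul, toW, Finsupp.linearCombination_single,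
        Finsupp.linearCombination_single, one_smul, one_smul]
      show interp K br ι (Sum.inr d) - _ • interp K br ι (Sum.inr d') = 0
      rw [interp, interp, hx, hy, hz, LK12.wG2_permy', smul_smul, LK12.sign_mul_self_cast,
        one_smul, sub_self]
    · obtain ⟨d, d', τ, hx, hy, hz, rfl⟩ := hr
      erw [map_sub, map_smul, toW, Finsupp.linearCombination_single,
        Finsupp.linearCombination_single, one_smul, one_smul]
      show interp K br ι (Sum.inr d) - _ • interp K br ι (Sum.inr d') = 0
      rw [interp, interp, hx, hy, hz, LK12.wG2_permz', smul_smul, LK12.sign_mul_self_cast,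
        one_smul, sub_self]
    · obtain ⟨d, d', hx, hy, hz, rfl⟩ := hr
      erw [map_add, toW, Finsupp.linearCombination_single,
        Finsupp.linearCombination_single, one_smul, one_smul]
      show interp K br ι (Sum.inr d) + interp K br ι (Sum.inr d') = 0
      rw [interp, interp, hx, hy, hz, LK12.wG2_swapxy', neg_add_cancel]
end

section
/- Let n ≥ 2, m = 3n-2 and σ ∈ S_n. In W(1) the following relation holds, for all x_i, y_j, z_k ∈ [m]: Σ_{i=1}^{n} (−1)^{i}[[[y_1,…,y_n],x_i,z_1,…,z_{n-2}],x_1,…,x̂_i,…,x_n] = sign(σ) · Σ_{i=1}^{n} (−1)^{i}[[[y_1,…,y_n],x_{σ(i)},z_1,…,z_{n-2}],x_{σ(1)},…, x̂_{σ(i)},…, x_{σ(n)}]. -/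
namespace LAnKeAux
open LAnKe
open LAnKe

variable {K : Type} [Field K] {n : ℕ} {A : Type} [AddCommGroup A] [Module K A]

/-- One term of the sum in Statement 17. -/
def Sterm (br : AlternatingMap K A A (Fin n)) (c : A) (z' : Fin (n - 2) → A)
    (v : Fin n → A) (i : Fin n) : A :=
  br (consF (br (cons2F c (v i) z')) (omitF v i))

/-- The full sum in Statement 17. -/
def Ssum (br : AlternatingMap K A A (Fin n)) (c : A) (z' : Fin (n - 2) → A)
    (v : Fin n → A) : A :=
  ∑ i : Fin n, ((-1 : K)) ^ ((i : ℕ) + 1) • Sterm br c z' v i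

lemma omitF_swap_left (v : Fin n → A) (p q : Fin n) (hpq : (q : ℕ) = (p : ℕ) + 1) :
    omitF (v ∘ ⇑(Equiv.swap p q)) p = omitF v q := by
  funext k
  simp only [omitF, Function.comp_apply, Equiv.swap_apply_def]
  split_ifs <;> (try simp only [Fin.ext_iff, Fin.mk.injEq, Fin.val_mk] at *) <;>
      (first
        | rfl
        | omega
        | exact congrArg v (by apply Fin.ext; (try simp only [Fin.val_mk]); omega))

lemma omitF_swap_right (v : Fin n → A) (p q : Fin n) (hpq : (q : ℕ) = (p : ℕ) + 1) :
    omitF (v ∘ ⇑(Equiv.swap p q)) q = omitF v p := by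
  funext k
  simp only [omitF, Function.comp_apply, Equiv.swap_apply_def]
  split_ifs <;> (try simp only [Fin.ext_iff, Fin.mk.injEq, Fin.val_mk] at *) <;>
      (first
        | rfl
        | omega
        | exact congrArg v (by apply Fin.ext; (try simp only [Fin.val_mk]); omega))

lemma apply_swap {β : Type} (f : Fin n → β) (p q t : Fin n) :
    f ((Equiv.swap p q) t) = f ⟨(if (t : ℕ) = (p : ℕ) then (q : ℕ) else
      if (t : ℕ) = (q : ℕ) then (p : ℕ) else (t : ℕ)),
      by split_ifs <;> omega⟩ := by
  apply congrArg f
  rw [Equiv.swap_apply_def]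
  apply Fin.ext
  simp only [apply_ite Fin.val, Fin.val_mk]
  split_ifs <;> (try simp only [Fin.ext_iff] at *) <;> omega

set_option maxHeartbeats 1000000 in
lemma consF_omitF_swap_lt (a : A) (v : Fin n → A) (p q i : Fin n)
    (hpq : (q : ℕ) = (p : ℕ) + 1) (hip : (i : ℕ) < (p : ℕ)) :
    consF a (omitF (v ∘ ⇑(Equiv.swap p q)) i) =
      (consF a (omitF v i)) ∘ ⇑(Equiv.swap p q) := by
  have e1 : (((p : ℕ)) = ((q : ℕ))) = False := by simp; omega
  have e2 : (((q : ℕ)) = ((p : ℕ))) = False := by simp; omega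
  funext t
  simp only [consF, omitF, Function.comp_apply, apply_swap, Fin.val_mk]
  rcases eq_or_ne (t : ℕ) (p : ℕ) with h1 | h1 <;>
    rcases eq_or_ne (t : ℕ) (q : ℕ) with h2 | h2
  all_goals try (exfalso; omega)
  all_goals try simp only [h1, h2, e1, e2, eq_self_iff_true, if_true, if_false, ite_true,
    ite_false, ne_eq, not_false_iff]
  all_goals try split_ifs
  all_goals try generalize_proofs
  all_goals try split_ifs
  all_goals
    first
      | rfl
      | contradiction
      | (exfalso; omega)
      | exact congrArg v (by apply Fin.ext; (try simp only [Fin.val_mk]); omega)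

set_option maxHeartbeats 1000000 in
lemma consF_omitF_swap_gt (a : A) (v : Fin n → A) (p q i : Fin n)
    (hpq : (q : ℕ) = (p : ℕ) + 1) (hiq : (q : ℕ) < (i : ℕ)) :
    consF a (omitF (v ∘ ⇑(Equiv.swap p q)) i) =
      (consF a (omitF v i)) ∘ ⇑(Equiv.swap q ⟨(q : ℕ) + 1, by omega⟩) := by
  have e1 : (((p : ℕ)) = ((q : ℕ))) = False := by simp; omega
  have e2 : (((q : ℕ)) = ((p : ℕ))) = False := by simp; omega
  funext t
  simp only [consF, omitF, Function.comp_apply, apply_swap, Fin.val_mk]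
  rcases eq_or_ne (t : ℕ) (p : ℕ) with h1 | h1 <;>
    rcases eq_or_ne (t : ℕ) (q : ℕ) with h2 | h2
  all_goals try (exfalso; omega)
  all_goals try simp only [h1, h2, e1, e2, eq_self_iff_true, if_true, if_false, ite_true,
    ite_false, ne_eq, not_false_iff]
  all_goals try split_ifs
  all_goals try generalize_proofs
  all_goals try split_ifs
  all_goals
    first
      | rfl
      | contradiction
      | (exfalso; omega)
      | exact congrArg v (by apply Fin.ext; (try simp only [Fin.val_mk]); omega)

lemma sterm_adj (br : AlternatingMap K A A (Fin n)) (c : A) (z' : Fin (n - 2) → A)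
    (p q : Fin n) (hpq : (q : ℕ) = (p : ℕ) + 1) (v : Fin n → A) (i : Fin n) :
    ((-1 : K)) ^ ((i : ℕ) + 1) • Sterm br c z' (v ∘ ⇑(Equiv.swap p q)) i =
      - (((-1 : K)) ^ (((Equiv.swap p q i : Fin n) : ℕ) + 1) •
        Sterm br c z' v (Equiv.swap p q i)) := by
  by_cases h1 : i = p
  · subst h1
    rw [Equiv.swap_apply_left]
    have e1 : Sterm br c z' (v ∘ ⇑(Equiv.swap i q)) i = Sterm br c z' v q := by
      unfold Sterm
      rw [omitF_swap_left v i q hpq]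
      have : (v ∘ ⇑(Equiv.swap i q)) i = v q := by
        rw [Function.comp_apply, Equiv.swap_apply_left]
      rw [this]
    rw [e1, hpq, pow_succ ((-1 : K)) ((i : ℕ) + 1), mul_neg_one, neg_smul, neg_neg]
  · by_cases h2 : i = q
    · subst h2
      rw [Equiv.swap_apply_right]
      have e1 : Sterm br c z' (v ∘ ⇑(Equiv.swap p i)) i = Sterm br c z' v p := by
        unfold Sterm
        rw [omitF_swap_right v p i hpq]
        have : (v ∘ ⇑(Equiv.swap p i)) i = v p := by
          rw [Function.comp_apply, Equiv.swap_apply_right]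
        rw [this]
      rw [e1, hpq, pow_succ ((-1 : K)) ((p : ℕ) + 1), mul_neg_one, neg_smul]
    · rw [Equiv.swap_apply_of_ne_of_ne h1 h2]
      have hv : (v ∘ ⇑(Equiv.swap p q)) i = v i := by
        rw [Function.comp_apply, Equiv.swap_apply_of_ne_of_ne h1 h2]
      have hne : (i : ℕ) ≠ (p : ℕ) := fun h => h1 (Fin.ext h)
      have hne' : (i : ℕ) ≠ (q : ℕ) := fun h => h2 (Fin.ext h)
      have e1 : Sterm br c z' (v ∘ ⇑(Equiv.swap p q)) i = - Sterm br c z' v i := by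
        unfold Sterm
        rw [hv]
        rcases Nat.lt_or_ge (i : ℕ) (p : ℕ) with hip | hip
        · rw [consF_omitF_swap_lt (br (cons2F c (v i) z')) v p q i hpq hip,
            AlternatingMap.map_swap _ _ (fun h => (by omega : ((p : ℕ) ≠ (q : ℕ)))
              (congrArg Fin.val h))]
        · have hiq : (q : ℕ) < (i : ℕ) := by omega
          rw [consF_omitF_swap_gt (br (cons2F c (v i) z')) v p q i hpq hiq,
            AlternatingMap.map_swap _ _ (fun h => (by
              simp only [Fin.ext_iff, Fin.val_mk] at h; omega : False))]
      rw [e1, smul_neg]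

lemma Ssum_adj (br : AlternatingMap K A A (Fin n)) (c : A) (z' : Fin (n - 2) → A)
    (p q : Fin n) (hpq : (q : ℕ) = (p : ℕ) + 1) (v : Fin n → A) :
    Ssum br c z' (v ∘ ⇑(Equiv.swap p q)) = - Ssum br c z' v := by
  unfold Ssum
  calc ∑ i : Fin n, ((-1 : K)) ^ ((i : ℕ) + 1) • Sterm br c z' (v ∘ ⇑(Equiv.swap p q)) i
      = ∑ i : Fin n, - (((-1 : K)) ^ (((Equiv.swap p q i : Fin n) : ℕ) + 1) •
          Sterm br c z' v (Equiv.swap p q i)) :=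
        Finset.sum_congr rfl fun i _ => sterm_adj br c z' p q hpq v i
    _ = - ∑ i : Fin n, ((-1 : K)) ^ (((Equiv.swap p q i : Fin n) : ℕ) + 1) •
          Sterm br c z' v (Equiv.swap p q i) := Finset.sum_neg_distrib _
    _ = - ∑ i : Fin n, ((-1 : K)) ^ ((i : ℕ) + 1) • Sterm br c z' v i := by
        rw [Equiv.sum_comp (Equiv.swap p q)
          (fun j => ((-1 : K)) ^ ((j : ℕ) + 1) • Sterm br c z' v j)]

lemma Ssum_swap_dist (br : AlternatingMap K A A (Fin n)) (c : A) (z' : Fin (n - 2) → A)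
    (d : ℕ) : ∀ p q : Fin n, (q : ℕ) = (p : ℕ) + d + 1 → ∀ v : Fin n → A,
    Ssum br c z' (v ∘ ⇑(Equiv.swap p q)) = - Ssum br c z' v := by
  induction d with
  | zero => exact fun p q h v => Ssum_adj br c z' p q (by omega) v
  | succ d ih =>
    intro p q h v
    have hq1 : (q : ℕ) - 1 < n := by omega
    set q' : Fin n := ⟨(q : ℕ) - 1, hq1⟩ with hq'
    have hqq' : (q : ℕ) = (q' : ℕ) + 1 := by simp [hq']; omega
    have hfun : v ∘ ⇑(Equiv.swap p q) =
        ((v ∘ ⇑(Equiv.swap q' q)) ∘ ⇑(Equiv.swap p q')) ∘ ⇑(Equiv.swap q' q) := by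
      funext t
      simp only [Function.comp_apply]
      apply congrArg v
      apply Fin.ext
      simp only [apply_swap (fun r : Fin n => r), apply_swap Fin.val, Fin.val_mk]
      split_ifs <;> omega
    rw [hfun, Ssum_adj br c z' q' q hqq' ((v ∘ ⇑(Equiv.swap q' q)) ∘ ⇑(Equiv.swap p q')),
      ih p q' (by simp [hq']; omega) (v ∘ ⇑(Equiv.swap q' q)),
      Ssum_adj br c z' q' q hqq' v, neg_neg]

lemma Ssum_swap_ne (br : AlternatingMap K A A (Fin n)) (c : A) (z' : Fin (n - 2) → A)
    (p q : Fin n) (hne : p ≠ q) (v : Fin n → A) :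
    Ssum br c z' (v ∘ ⇑(Equiv.swap p q)) = - Ssum br c z' v := by
  rcases Nat.lt_or_ge (p : ℕ) (q : ℕ) with h | h
  · exact Ssum_swap_dist br c z' ((q : ℕ) - (p : ℕ) - 1) p q (by omega) v
  · have h' : (q : ℕ) < (p : ℕ) := by
      rcases Nat.lt_or_ge (q : ℕ) (p : ℕ) with h' | h'
      · exact h'
      · exact absurd (Fin.ext (by omega)) hne
    rw [Equiv.swap_comm]
    exact Ssum_swap_dist br c z' ((p : ℕ) - (q : ℕ) - 1) q p (by omega) v

lemma Ssum_perm (br : AlternatingMap K A A (Fin n)) (c : A) (z' : Fin (n - 2) → A)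
    (σ : Equiv.Perm (Fin n)) : ∀ v : Fin n → A,
    Ssum br c z' (v ∘ ⇑σ) = ((Equiv.Perm.sign σ : ℤ) : K) • Ssum br c z' v := by
  refine Equiv.Perm.swap_induction_on σ ?_ ?_
  · intro v
    simp [Equiv.Perm.sign_one]
  · intro f a b hab ih v
    have hc : v ∘ ⇑(Equiv.swap a b * f) = (v ∘ ⇑(Equiv.swap a b)) ∘ ⇑f := rfl
    rw [hc, ih (v ∘ ⇑(Equiv.swap a b)), Ssum_swap_ne br c z' a b hab v,
      Equiv.Perm.sign_mul, Equiv.Perm.sign_swap hab]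
    rw [smul_neg, Units.val_mul]
    push_cast
    rw [neg_one_mul, neg_smul]

end LAnKeAux

open LAnKe in
/-- Lemma 5.10.  Let `n ≥ 2`, `m = 3n-2` and `σ ∈ S_n`.  In `W(1)`
(inside the free anticommutative `n`-ary algebra `A`, in which `W` and `W(1)` live) the
following relation holds for all letters:
`∑ᵢ (−1)^i [[[y],x_i,z],x₁,…,x̂_i,…,x_n] = sign σ · ∑ᵢ (−1)^i [[[y],x_{σ(i)},z],x_{σ(1)},…,x̂_{σ(i)},…,x_{σ(n)}]`. -/
theorem statement_17 (K : Type) [Field K] [CharZero K] (n m : ℕ) (hn : 2 ≤ n)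
    (hm : m = 3 * n - 2) (A : Type) [AddCommGroup A] [Module K A]
    (br : AlternatingMap K A A (Fin n)) (ι : Fin m → A)
    (hfreeA : IsFreeAnti K br ι) (σ : Equiv.Perm (Fin n))
    (x y : Fin n → Fin m) (z : Fin (n - 2) → Fin m) (hv : ValidG2 m x y z) :
    (∑ i : Fin n, ((-1 : K)) ^ ((i : ℕ) + 1) •
        app1 K br (app2 K br (br (ι ∘ y)) (ι (x i)) (ι ∘ z)) (ι ∘ omitF x i)) =
      ((Equiv.Perm.sign σ : ℤ) : K) •
        ∑ i : Fin n, ((-1 : K)) ^ ((i : ℕ) + 1) •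
          app1 K br (app2 K br (br (ι ∘ y)) (ι ((x ∘ σ) i)) (ι ∘ z))
            (ι ∘ omitF (x ∘ σ) i) := by
  have hterm : ∀ (u : Fin n → Fin m) (i : Fin n), (ι ∘ omitF u i) = omitF (ι ∘ u) i := by
    intro u i
    funext k
    simp only [omitF, Function.comp_apply]
    split_ifs <;> rfl
  have hL : (∑ i : Fin n, ((-1 : K)) ^ ((i : ℕ) + 1) •
        app1 K br (app2 K br (br (ι ∘ y)) (ι (x i)) (ι ∘ z)) (ι ∘ omitF x i))
      = LAnKeAux.Ssum br (br (ι ∘ y)) (ι ∘ z) (ι ∘ x) := by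
    unfold LAnKeAux.Ssum LAnKeAux.Sterm
    apply Finset.sum_congr rfl
    intro i _
    rw [hterm x i]
    rfl
  have hR : (∑ i : Fin n, ((-1 : K)) ^ ((i : ℕ) + 1) •
        app1 K br (app2 K br (br (ι ∘ y)) (ι ((x ∘ σ) i)) (ι ∘ z)) (ι ∘ omitF (x ∘ σ) i))
      = LAnKeAux.Ssum br (br (ι ∘ y)) (ι ∘ z) ((ι ∘ x) ∘ ⇑σ) := by
    unfold LAnKeAux.Ssum LAnKeAux.Sterm
    apply Finset.sum_congr rfl
    intro i _
    rw [hterm (x ∘ σ) i]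
    rfl
  rw [hL, hR, LAnKeAux.Ssum_perm br (br (ι ∘ y)) (ι ∘ z) σ (ι ∘ x), smul_smul]
  rcases Int.units_eq_one_or (Equiv.Perm.sign σ) with h | h <;> simp [h]
end
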